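/- arXiv:1309.4291 — 2 statements merged into one kernel-verified Lean document; each statement's English description precedes it below -/
import Mathlib

section
/- Consider the modified skip-free algorithm applied to a finite communicating MDP on S = {0, 1, …, M} that is skip-free in the negative direction, producing sequences of policies d_n and values g_n. Then: (i) at each iteration either g_{n+1} < g_n, or g_{n+1} = g_n, and in the latter case g_{n+1} is the minimal expected average cost, and there exists K ∈ {0,…,M} such that d_{n+1}, together with the values x = g_{n+1} and the computed y_i, satisfies the skip-free average-cost optimality equations on the states K, …, M of the restricted model Π_K, and d_{n+1} can be modified on the transient states 0, …, K−1 to yield a stationary deterministic policy that is average cost optimal for every starting state; (ii) the modified algorithm converges (g_{n+1} = g_n) after a finite number of iterations. -/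
open Finset Filter

noncomputable section

/-- A rooted tree structure on a state space `S`: a root, a parent map fixing the root,
such that iterating the parent map from any state reaches the root. -/
structure SFTree (S : Type*) where
  root : S
  parent : S → S
  parent_root : parent root = root
  reaches_root : ∀ i : S, ∃ n : ℕ, parent^[n] i = root

namespace SFTree

variable {S : Type*} [Fintype S] [DecidableEq S]

open Classical in
/-- The set of descendants of `i`: states `j ≠ i` whose path to the root passes through `i`. -/
def desc (T : SFTree S) (i : S) : Finset S :=
  Finset.univ.filter fun j => j ≠ i ∧ ∃ n : ℕ, T.parent^[n] j = i

open Classical in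
/-- The subtree rooted at `i`: `i` together with its descendants. -/
def subtree (T : SFTree S) (i : S) : Finset S :=
  Finset.univ.filter fun j => ∃ n : ℕ, T.parent^[n] j = i

open Classical in
/-- The states strictly after `i` on the path from `i` to `j`. -/
def delta (T : SFTree S) (i j : S) : Finset S :=
  Finset.univ.filter fun r =>
    r ≠ i ∧ (∃ n : ℕ, T.parent^[n] j = r) ∧ (∃ m : ℕ, T.parent^[m] r = i)

end SFTree

/-- A finite Markov decision process: costs and transition probabilities. -/
structure MDP (S A : Type*) [Fintype S] where
  c : S → A → ℝ
  p : S → A → S → ℝ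
  p_nonneg : ∀ i a j, 0 ≤ p i a j
  p_sum_one : ∀ i a, ∑ j, p i a j = 1

namespace MDP

variable {S A : Type*} [Fintype S] [DecidableEq S]

/-- Tail probability: the probability of jumping from `i` into the subtree rooted at `k`. -/
def ptail (M : MDP S A) (T : SFTree S) (i : S) (a : A) (k : S) : ℝ :=
  ∑ s ∈ T.subtree k, M.p i a s

/-- Skip-free in the negative direction on the tree `T`: from `i ≠ root` the only possible
transitions are to the parent of `i` or into the subtree rooted at `i`. -/
def IsSkipFree (M : MDP S A) (T : SFTree S) : Prop :=
  ∀ i, i ≠ T.root → ∀ a j, M.p i a j ≠ 0 → j = T.parent i ∨ j ∈ T.subtree i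

/-- Transition matrix of the stationary deterministic policy `d`. -/
def Pmat (M : MDP S A) (d : S → A) : Matrix S S ℝ :=
  Matrix.of fun i j => M.p i (d i) j

/-- Cost vector of the stationary deterministic policy `d`. -/
def cvec (M : MDP S A) (d : S → A) : S → ℝ := fun i => M.c i (d i)

/-- Expected average cost of the stationary deterministic policy `d` starting from `i`. -/
def avgCost (M : MDP S A) (d : S → A) (i : S) : ℝ :=
  Filter.limsup
    (fun n : ℕ => (n : ℝ)⁻¹ * ∑ t ∈ Finset.range n, ((M.Pmat d ^ t).mulVec (M.cvec d)) i)
    Filter.atTop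

end MDP

/-- A (substochastic) matrix is irreducible if every state can reach every other state
in a positive number of steps. -/
def MatIrreducible {S : Type*} [Fintype S] [DecidableEq S] (P : Matrix S S ℝ) : Prop :=
  ∀ i j, ∃ n : ℕ, 0 < n ∧ 0 < (P ^ n) i j

/-- A recurrent model: every stationary deterministic policy has an irreducible
transition matrix. -/
def IsRecurrentModel {S A : Type*} [Fintype S] [DecidableEq S] (M : MDP S A) : Prop :=
  ∀ d : S → A, MatIrreducible (M.Pmat d)

/-- The probability weight of a path of length `n`. -/
def pathWt {S : Type*} [Fintype S] (P : Matrix S S ℝ) {n : ℕ} (x : Fin (n + 1) → S) : ℝ :=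
  ∏ t : Fin n, P (x t.castSucc) (x t.succ)

open Classical in
/-- `E[f(X_n); τ > n]` for the chain with matrix `P` started at `z`, where `τ` is the
first-return epoch to `z` (the first time the chain enters `z` from a state `≠ z`). -/
def retTerm {S : Type*} [Fintype S] (P : Matrix S S ℝ) (z : S) (f : S → ℝ) (n : ℕ) : ℝ :=
  ∑ x ∈ Finset.univ.filter
      (fun (x : Fin (n + 1) → S) =>
        x 0 = z ∧ ∀ t : Fin n, ¬(x t.castSucc ≠ z ∧ x t.succ = z)),
    pathWt P x * f (x (Fin.last n))

/-- `E[∑_{t=0}^{τ-1} f(X_t)]` for the chain with matrix `P` started at `z`, where `τ` is the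
first-return epoch to `z`. -/
def retSum {S : Type*} [Fintype S] (P : Matrix S S ℝ) (z : S) (f : S → ℝ) : ℝ :=
  ∑' n : ℕ, retTerm P z f n

open Classical in
/-- `E[f(X_n); σ > n]` for the chain with matrix `P` started at `i`, where `σ` is the
first-passage epoch to `z`, `σ = min {t > 0 : X_t = z}`. -/
def passTerm {S : Type*} [Fintype S] (P : Matrix S S ℝ) (i z : S) (f : S → ℝ) (n : ℕ) : ℝ :=
  ∑ x ∈ Finset.univ.filter
      (fun (x : Fin (n + 1) → S) => x 0 = i ∧ ∀ t : Fin n, x t.succ ≠ z),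
    pathWt P x * f (x (Fin.last n))

/-- `E[∑_{t=0}^{σ-1} f(X_t)]` for the chain with matrix `P` started at `i`, where `σ` is the
first-passage epoch to `z`. -/
def passSum {S : Type*} [Fintype S] (P : Matrix S S ℝ) (i z : S) (f : S → ℝ) : ℝ :=
  ∑' n : ℕ, passTerm P i z f n

end

/-- A closed communicating class of the matrix `P`. -/
def IsClosedClass {S : Type*} [Fintype S] [DecidableEq S]
    (P : Matrix S S ℝ) (E : Set S) : Prop :=
  E.Nonempty
    ∧ (∀ i ∈ E, ∀ j ∈ E, ∃ n : ℕ, 0 < (P ^ n) i j)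
    ∧ (∀ i ∈ E, ∀ j, 0 < P i j → j ∈ E)

/-- Tail probabilities `p̄_{ik}(a) = ∑_{s=k}^M p_{is}(a)` on `{0,…,M}`. -/
noncomputable def ptailF {M : ℕ} {A : Type*}
    (Mdp : MDP (Fin (M + 1)) A) (i : Fin (M + 1)) (a : A) (k : Fin (M + 1)) : ℝ :=
  ∑ s ∈ Finset.Ici k, Mdp.p i a s

noncomputable section
namespace SFAux
set_option maxHeartbeats 1000000
section Generic
variable {S : Type*} [Fintype S] [DecidableEq S]
set_option linter.unusedSectionVars false


variable {S : Type*} [Fintype S] [DecidableEq S]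
set_option linter.unusedSectionVars false

def RowStoch (P : Matrix S S ℝ) : Prop := (∀ i j, 0 ≤ P i j) ∧ ∀ i, ∑ j, P i j = 1

lemma RowStoch.one : RowStoch (1 : Matrix S S ℝ) := by
  constructor
  · intro i j; by_cases h : i = j <;> simp [Matrix.one_apply, h]
  · intro i; simp [Matrix.one_apply]

lemma RowStoch.mul {P Q : Matrix S S ℝ} (hP : RowStoch P) (hQ : RowStoch Q) :
    RowStoch (P * Q) := by
  constructor
  · intro i j; rw [Matrix.mul_apply]
    exact Finset.sum_nonneg fun k _ => mul_nonneg (hP.1 i k) (hQ.1 k j)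
  · intro i
    simp only [Matrix.mul_apply]
    rw [Finset.sum_comm]
    have : ∀ k ∈ Finset.univ, ∑ j, P i k * Q k j = P i k := by
      intro k _
      rw [← Finset.mul_sum, hQ.2 k, mul_one]
    rw [Finset.sum_congr rfl this, hP.2 i]

lemma RowStoch.pow {P : Matrix S S ℝ} (hP : RowStoch P) (n : ℕ) : RowStoch (P ^ n) := by
  induction n with
  | zero => simpa using RowStoch.one
  | succ n ih => rw [pow_succ]; exact ih.mul hP

def MClosed (P : Matrix S S ℝ) (F : Set S) : Prop := ∀ i ∈ F, ∀ j, P i j ≠ 0 → j ∈ F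

lemma MClosed.pow_zero {P : Matrix S S ℝ} {F : Set S} (h : MClosed P F)
    {i j : S} (hi : i ∈ F) (hj : j ∉ F) (n : ℕ) : (P ^ n) i j = 0 := by
  induction n generalizing i with
  | zero =>
    have : i ≠ j := fun hij => hj (hij ▸ hi)
    simp [Matrix.one_apply, this]
  | succ n ih =>
    rw [pow_succ', Matrix.mul_apply]
    apply Finset.sum_eq_zero
    intro k _
    by_cases hk : P i k = 0
    · simp [hk]
    · rw [ih (h i hi k hk)]; ring

/-- if two vectors agree on a closed set, their `P^n`-averages from inside agree -/
lemma mulVec_congr_closed {P : Matrix S S ℝ} {F : Set S} (h : MClosed P F)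
    {v w : S → ℝ} (hvw : ∀ i ∈ F, v i = w i) {j : S} (hj : j ∈ F) (n : ℕ) :
    (P ^ n).mulVec v j = (P ^ n).mulVec w j := by
  unfold Matrix.mulVec dotProduct
  apply Finset.sum_congr rfl
  intro i _
  by_cases hi : i ∈ F
  · rw [hvw i hi]
  · show (P ^ n) j i * v i = (P ^ n) j i * w i
    rw [h.pow_zero hj hi]; ring

lemma mulVec_const {P : Matrix S S ℝ} (hP : RowStoch P) (g : ℝ) (j : S) :
    P.mulVec (fun _ => g) j = g := by
  unfold Matrix.mulVec dotProduct
  rw [← Finset.sum_mul, hP.2 j, one_mul]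

lemma abs_mulVec_le {P : Matrix S S ℝ} (hP : RowStoch P) {v : S → ℝ} {B : ℝ}
    (hv : ∀ i, |v i| ≤ B) (j : S) : |P.mulVec v j| ≤ B := by
  unfold Matrix.mulVec dotProduct
  calc |∑ i, P j i * v i| ≤ ∑ i, |P j i * v i| := Finset.abs_sum_le_sum_abs _ _
    _ ≤ ∑ i, P j i * B := by
        apply Finset.sum_le_sum
        intro i _
        rw [abs_mul, abs_of_nonneg (hP.1 j i)]
        exact mul_le_mul_of_nonneg_left (hv i) (hP.1 j i)
    _ = B := by rw [← Finset.sum_mul, hP.2 j, one_mul]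

/-- the fundamental telescoping identity -/
lemma telescope {P : Matrix S S ℝ} (hP : RowStoch P) {F : Set S} (hF : MClosed P F)
    (c h s : S → ℝ) (g : ℝ)
    (heq : ∀ i ∈ F, c i + P.mulVec h i = g + h i + s i)
    {j : S} (hj : j ∈ F) (n : ℕ) :
    ∑ t ∈ Finset.range n, (P ^ t).mulVec c j
      = n * g + h j - (P ^ n).mulVec h j + ∑ t ∈ Finset.range n, (P ^ t).mulVec s j := by
  induction n with
  | zero => simp
  | succ n ih =>
    rw [Finset.sum_range_succ, Finset.sum_range_succ, ih]
    have h1 : (P ^ n).mulVec c j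
        = (P ^ n).mulVec (fun i => g + h i + s i - P.mulVec h i) j := by
      apply mulVec_congr_closed hF _ hj
      intro i hi
      have := heq i hi; linarith
    have h2 : (P ^ n).mulVec (fun i => g + h i + s i - P.mulVec h i) j
        = g + (P ^ n).mulVec h j + (P ^ n).mulVec s j - (P ^ (n+1)).mulVec h j := by
      have e1 : (fun i => g + h i + s i - P.mulVec h i)
          = (fun _ => g) + h + s - P.mulVec h := by
        funext i; simp [Pi.add_apply, Pi.sub_apply]
      rw [e1, Matrix.mulVec_sub, Matrix.mulVec_add, Matrix.mulVec_add]
      have e2 : (P ^ n).mulVec (P.mulVec h) j = (P ^ (n+1)).mulVec h j := by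
        rw [Matrix.mulVec_mulVec, ← pow_succ]
      simp only [Pi.add_apply, Pi.sub_apply, e2, mulVec_const (hP.pow n)]
    rw [h1, h2]
    push_cast
    ring




def avgSeq (P : Matrix S S ℝ) (c : S → ℝ) (j : S) (n : ℕ) : ℝ :=
  (n : ℝ)⁻¹ * ∑ t ∈ Finset.range n, (P ^ t).mulVec c j

lemma exists_abs_bound (v : S → ℝ) : ∃ B, 0 ≤ B ∧ ∀ i, |v i| ≤ B :=
  ⟨∑ i, |v i|, Finset.sum_nonneg fun _ _ => abs_nonneg _,
    fun i => Finset.single_le_sum (f := fun i => |v i|) (fun _ _ => abs_nonneg _)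
      (Finset.mem_univ i)⟩


lemma avgSeq_abs_le {P : Matrix S S ℝ} (hP : RowStoch P) {c : S → ℝ} {B : ℝ}
    (hB : 0 ≤ B) (hc : ∀ i, |c i| ≤ B) (j : S) (n : ℕ) : |avgSeq P c j n| ≤ B := by
  unfold avgSeq
  rcases Nat.eq_zero_or_pos n with h | h
  · simp [h, hB]
  · have h1 : |∑ t ∈ Finset.range n, (P ^ t).mulVec c j| ≤ n * B := by
      calc |∑ t ∈ Finset.range n, (P ^ t).mulVec c j|
          ≤ ∑ t ∈ Finset.range n, |(P ^ t).mulVec c j| := Finset.abs_sum_le_sum_abs _ _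
        _ ≤ ∑ _t ∈ Finset.range n, B := Finset.sum_le_sum fun t _ =>
              abs_mulVec_le (hP.pow t) hc j
        _ = n * B := by simp [mul_comm]
    rw [abs_mul, abs_of_nonneg (by positivity : (0:ℝ) ≤ (n:ℝ)⁻¹)]
    calc (n:ℝ)⁻¹ * |∑ t ∈ Finset.range n, (P ^ t).mulVec c j| ≤ (n:ℝ)⁻¹ * (n * B) := by
          apply mul_le_mul_of_nonneg_left h1 (by positivity)
      _ = B := by field_simp

lemma tendsto_avg_of_bound {P : Matrix S S ℝ} {c : S → ℝ} {j : S} {g C : ℝ}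
    (hC : ∀ n : ℕ, |∑ t ∈ Finset.range n, (P ^ t).mulVec c j - n * g| ≤ C) :
    Tendsto (avgSeq P c j) atTop (nhds g) := by
  rw [← tendsto_sub_nhds_zero_iff]
  apply squeeze_zero_norm' (a := fun n : ℕ => C * (n:ℝ)⁻¹)
  · filter_upwards [eventually_ge_atTop 1] with n hn
    have hn' : (n:ℝ) ≠ 0 := by positivity
    have : avgSeq P c j n - g
        = (n:ℝ)⁻¹ * (∑ t ∈ Finset.range n, (P ^ t).mulVec c j - n * g) := by
      unfold avgSeq; field_simp
    rw [Real.norm_eq_abs, this, abs_mul, abs_of_nonneg (by positivity : (0:ℝ) ≤ (n:ℝ)⁻¹),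
      mul_comm]
    exact mul_le_mul_of_nonneg_right (hC n) (by positivity)
  · simpa using tendsto_const_nhds.mul (tendsto_inv_atTop_nhds_zero_nat (𝕜 := ℝ))

lemma limsup_avg_eq {P : Matrix S S ℝ} {c : S → ℝ} {j : S} {g C : ℝ}
    (hC : ∀ n : ℕ, |∑ t ∈ Finset.range n, (P ^ t).mulVec c j - n * g| ≤ C) :
    Filter.limsup (avgSeq P c j) Filter.atTop = g :=
  (tendsto_avg_of_bound hC).limsup_eq

lemma le_limsup_avg {P : Matrix S S ℝ} (hP : RowStoch P) (c : S → ℝ) (j : S) {g' C : ℝ}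
    (hlb : ∀ᶠ n : ℕ in atTop, g' - C * (n:ℝ)⁻¹ ≤ avgSeq P c j n) :
    g' ≤ Filter.limsup (avgSeq P c j) Filter.atTop := by
  obtain ⟨B, hB0, hB⟩ := exists_abs_bound c
  have hbdd : Filter.IsBoundedUnder (· ≤ ·) Filter.atTop (avgSeq P c j) :=
    isBoundedUnder_of ⟨B, fun n => (le_abs_self _).trans
      (by simpa [abs_abs] using (avgSeq_abs_le hP hB0 hB j n))⟩
  apply le_of_forall_pos_le_add
  intro ε hε
  have h1 : ∀ᶠ n : ℕ in atTop, g' - ε ≤ avgSeq P c j n := by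
    have h2 : Tendsto (fun n : ℕ => C * (n:ℝ)⁻¹) atTop (nhds 0) := by
      simpa using tendsto_const_nhds.mul (tendsto_inv_atTop_nhds_zero_nat (𝕜 := ℝ))
    have h3 : ∀ᶠ n : ℕ in atTop, C * (n:ℝ)⁻¹ ≤ ε := by
      filter_upwards [h2.eventually (eventually_le_nhds hε)] with n hn using hn
    filter_upwards [hlb, h3] with n hn1 hn2
    linarith
  have := Filter.le_limsup_of_frequently_le h1.frequently hbdd
  linarith



def ind (z : S) : S → ℝ := fun i => if i = z then 1 else 0

lemma mulVec_ind (P : Matrix S S ℝ) (z j : S) : P.mulVec (ind z) j = P j z := by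
  unfold Matrix.mulVec dotProduct ind
  simp

lemma sum_window_le {a : ℕ → ℝ} (ha : ∀ s, 0 ≤ a s) (T L : ℕ) :
    ∑ t ∈ range T, ∑ k ∈ range (L+1), a (t+k) ≤ (L+1) * ∑ s ∈ range (T+L), a s := by
  rw [Finset.sum_comm]
  have h1 : ∀ k ∈ range (L+1), ∑ t ∈ range T, a (t+k) ≤ ∑ s ∈ range (T+L), a s := by
    intro k hk
    have hk' : k ≤ L := Nat.lt_succ_iff.mp (mem_range.mp hk)
    have h2 : ∑ t ∈ range T, a (t+k) = ∑ s ∈ Ico k (T+k), a s := by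
      rw [Finset.sum_Ico_eq_sum_range]
      simp only [Nat.add_sub_cancel]
      apply Finset.sum_congr rfl; intro t _; rw [add_comm]
    rw [h2]
    apply Finset.sum_le_sum_of_subset_of_nonneg
    · intro s hs; rw [mem_Ico] at hs; rw [mem_range]; omega
    · intros; exact ha _
  calc ∑ k ∈ range (L+1), ∑ t ∈ range T, a (t+k)
      ≤ ∑ _k ∈ range (L+1), ∑ s ∈ range (T+L), a s := Finset.sum_le_sum h1
    _ = (L+1) * ∑ s ∈ range (T+L), a s := by
        rw [Finset.sum_const, Finset.card_range, nsmul_eq_mul]; push_cast; ring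

lemma freq_pos {P : Matrix S S ℝ} (hP : RowStoch P) {E : Set S} (hE : MClosed P E)
    {m j : S} (hm : m ∈ E) (hj : j ∈ E)
    (hreach : ∀ i ∈ E, ∃ l : ℕ, 0 < (P ^ l) i m) :
    ∃ β > 0, ∀ᶠ n : ℕ in atTop, β ≤ (n:ℝ)⁻¹ * ∑ t ∈ range n, (P ^ t) j m := by
  classical
  have hl : ∀ i : S, ∃ l : ℕ, i ∈ E → 0 < (P ^ l) i m := by
    intro i; by_cases h : i ∈ E
    · obtain ⟨l, hl⟩ := hreach i h; exact ⟨l, fun _ => hl⟩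
    · exact ⟨0, fun h' => absurd h' h⟩
  choose l hlspec using hl
  set L := Finset.univ.sup l with hL
  set f : S → ℝ := fun i => ∑ k ∈ range (L+1), (P ^ k) i m with hf
  have hEfin : (Finset.univ.filter (· ∈ E)).Nonempty := ⟨m, by simp [hm]⟩
  obtain ⟨b, hb, hbmin⟩ := Finset.exists_min_image _ f hEfin
  set δ := f b with hδ
  have hbE : b ∈ E := (Finset.mem_filter.mp hb).2
  have hδpos : 0 < δ := by
    have h1 : (P ^ (l b)) b m ≤ f b :=
      Finset.single_le_sum (f := fun k => (P ^ k) b m)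
        (fun k _ => ((hP.pow k).1 b m))
        (by rw [mem_range]; exact Nat.lt_succ_of_le (Finset.le_sup (Finset.mem_univ b)))
    exact lt_of_lt_of_le (hlspec b hbE) h1
  -- expansion of (P^t).mulVec f
  have hexp : ∀ t : ℕ, (P ^ t).mulVec f j = ∑ k ∈ range (L+1), (P ^ (t+k)) j m := by
    intro t
    unfold Matrix.mulVec dotProduct
    simp only [hf, Finset.mul_sum]
    rw [Finset.sum_comm]
    apply Finset.sum_congr rfl
    intro k _
    rw [pow_add, Matrix.mul_apply]
  have hkey : ∀ t : ℕ, δ ≤ (P ^ t).mulVec f j := by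
    intro t
    unfold Matrix.mulVec dotProduct
    have h1 : δ = ∑ i, (P ^ t) j i * δ := by
      rw [← Finset.sum_mul, (hP.pow t).2 j, one_mul]
    rw [h1]
    apply Finset.sum_le_sum
    intro i _
    by_cases hiE : i ∈ E
    · apply mul_le_mul_of_nonneg_left _ ((hP.pow t).1 j i)
      exact hbmin i (Finset.mem_filter.mpr ⟨Finset.mem_univ i, hiE⟩)
    · have h0 : (P ^ t) j i = 0 := hE.pow_zero hj hiE t
      have hfi : 0 ≤ f i := by
        simp only [hf]; exact Finset.sum_nonneg fun k _ => (hP.pow k).1 i m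
      calc (P ^ t) j i * δ = 0 := by rw [h0]; ring
        _ ≤ (P ^ t) j i * f i := mul_nonneg ((hP.pow t).1 j i) hfi
  refine ⟨δ / (2 * (L+1)), by positivity, ?_⟩
  filter_upwards [eventually_ge_atTop (2*L+1)] with n hn
  have hΦ0 : (0:ℝ) ≤ ∑ t ∈ range n, (P ^ t) j m :=
    Finset.sum_nonneg fun t _ => (hP.pow t).1 j m
  have h6 : δ * ((n:ℝ) - L) ≤ (L+1) * ∑ s ∈ range n, (P ^ s) j m := by
    have h7 : ∑ t ∈ range (n - L), (P ^ t).mulVec f j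
        ≤ (L+1) * ∑ s ∈ range n, (P ^ s) j m := by
      have h8 : n - L + L = n := by omega
      calc ∑ t ∈ range (n - L), (P ^ t).mulVec f j
          = ∑ t ∈ range (n - L), ∑ k ∈ range (L+1), (P ^ (t+k)) j m := by
            apply Finset.sum_congr rfl; intro t _; exact hexp t
        _ ≤ (L+1) * ∑ s ∈ range (n - L + L), (P ^ s) j m :=
            sum_window_le (fun s => (hP.pow s).1 j m) _ _
        _ = (L+1) * ∑ s ∈ range n, (P ^ s) j m := by rw [h8]
    have h9 : δ * ((n:ℝ) - L) = ∑ _t ∈ range (n - L), δ := by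
      rw [Finset.sum_const, Finset.card_range, nsmul_eq_mul]
      have : ((n - L : ℕ) : ℝ) = (n:ℝ) - L := by
        rw [Nat.cast_sub (by omega)]
      rw [this]; ring
    rw [h9]
    exact le_trans (Finset.sum_le_sum fun t _ => hkey t) h7
  -- final arithmetic
  have hn0 : (0:ℝ) < n := by
    have : 0 < n := by omega
    exact_mod_cast this
  have hnL : (n:ℝ) ≥ 2*L+1 := by exact_mod_cast hn
  rw [inv_mul_eq_div, le_div_iff₀ hn0]
  have hL1 : (0:ℝ) < (L:ℝ)+1 := by positivity
  rw [div_mul_eq_mul_div, div_le_iff₀ (by positivity : (0:ℝ) < 2*((L:ℝ)+1))]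
  nlinarith [h6, hΦ0, hδpos, hnL, hL1]

end Generic


set_option maxHeartbeats 1000000

structure Ctx (M : ℕ) (A : Type*) [Fintype A] [Nonempty A] where
  Mdp : MDP (Fin (M + 1)) A
  hsf : ∀ (i j : Fin (M + 1)) (a : A), (j : ℕ) + 1 < (i : ℕ) → Mdp.p i a j = 0
  hBne : ∀ i : Fin (M + 1), i ≠ 0 → ∃ a : A, 0 < Mdp.p i a (i - 1)
  hcomm : ∀ i j : Fin (M + 1), ∃ d : Fin (M + 1) → A, ∃ n : ℕ, 0 < ((Mdp.Pmat d) ^ n) i j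
  B : Fin (M + 1) → Set A
  Bbar : Fin (M + 1) → Set A
  hBdef : ∀ i, B i = {a : A | 0 < Mdp.p i a (i - 1)}
  hBbardef : ∀ i, Bbar i = if i = 0 then (Set.univ : Set A)
      else {a : A | Mdp.p i a (i - 1) = 0}
  d : ℕ → Fin (M + 1) → A
  g : ℕ → ℝ
  y : ℕ → Fin (M + 1) → ℝ
  t : ℕ → Fin (M + 1) → ℝ
  aa : ℕ → Fin (M + 1) → A
  ar : ℕ → Fin (M + 1) → A
  u : ℕ → Fin (M + 1) → ℝ
  hg0 : (∃! E : Set (Fin (M + 1)), IsClosedClass (Mdp.Pmat (d 0)) E)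
      ∧ ∀ j, g 0 = Mdp.avgCost (d 0) j
  hy : ∀ n, ∀ i : Fin (M + 1), i ≠ 0 →
      y n i = ⨅ a : (B i),
        (Mdp.c i ↑a - g n + ∑ k ∈ Finset.Ioi i, ptailF Mdp i ↑a k * y n k)
          / Mdp.p i ↑a (i - 1)
  haa : ∀ n, ∀ i : Fin (M + 1), i ≠ 0 → aa n i ∈ B i ∧
      (Mdp.c i (aa n i) - g n + ∑ k ∈ Finset.Ioi i, ptailF Mdp i (aa n i) k * y n k)
          / Mdp.p i (aa n i) (i - 1) = y n i
  ht : ∀ n, ∀ i : Fin (M + 1), i ≠ 0 →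
      t n i = (1 + ∑ k ∈ Finset.Ioi i, ptailF Mdp i (aa n i) k * t n k)
          / Mdp.p i (aa n i) (i - 1)
  hu : ∀ n, ∀ r : Fin (M + 1), (Bbar r).Nonempty →
      ar n r ∈ Bbar r
      ∧ u n r = ⨅ a : (Bbar r),
          (Mdp.c r ↑a - g n + ∑ k ∈ Finset.Ioi r, ptailF Mdp r ↑a k * y n k)
            / (1 + ∑ k ∈ Finset.Ioi r, ptailF Mdp r ↑a k * t n k)
      ∧ (Mdp.c r (ar n r) - g n + ∑ k ∈ Finset.Ioi r, ptailF Mdp r (ar n r) k * y n k)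
            / (1 + ∑ k ∈ Finset.Ioi r, ptailF Mdp r (ar n r) k * t n k) = u n r
  hstep : ∀ n, ∃ r : Fin (M + 1), (Bbar r).Nonempty
      ∧ g (n + 1) = g n + u n r
      ∧ (∀ r' : Fin (M + 1), (Bbar r').Nonempty → g (n + 1) ≤ g n + u n r')
      ∧ (∀ r' : Fin (M + 1), (Bbar r').Nonempty → g n + u n r' = g (n + 1) → r ≤ r')
      ∧ d (n + 1) r = ar n r
      ∧ (∀ i : Fin (M + 1), r < i → d (n + 1) i = aa n i)

namespace Ctx

variable {M : ℕ} {A : Type*} [Fintype A] [Nonempty A] (C : Ctx M A)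

/-- numerator -/
def num (n : ℕ) (i : Fin (M + 1)) (a : A) : ℝ :=
  C.Mdp.c i a - C.g n + ∑ k ∈ Finset.Ioi i, ptailF C.Mdp i a k * C.y n k

/-- denominator -/
def den (n : ℕ) (i : Fin (M + 1)) (a : A) : ℝ :=
  1 + ∑ k ∈ Finset.Ioi i, ptailF C.Mdp i a k * C.t n k

/-- cumulative sums above a base point -/
def cum (b : Fin (M + 1)) (φ : Fin (M + 1) → ℝ) (j : Fin (M + 1)) : ℝ :=
  ∑ k ∈ Finset.Ioc b j, φ k

lemma ptail_nonneg (i : Fin (M + 1)) (a : A) (k : Fin (M + 1)) :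
    0 ≤ ptailF C.Mdp i a k :=
  Finset.sum_nonneg fun s _ => C.Mdp.p_nonneg i a s

lemma ptail_eq (i : Fin (M + 1)) (a : A) (k : Fin (M + 1)) :
    ptailF C.Mdp i a k = 1 - ∑ s ∈ Finset.Iio k, C.Mdp.p i a s := by
  have h : ∑ s ∈ Finset.Iio k, C.Mdp.p i a s + ∑ s ∈ Finset.Ici k, C.Mdp.p i a s = 1 := by
    rw [← C.Mdp.p_sum_one i a]
    rw [← Finset.sum_union]
    · congr 1
      ext s
      simp [Finset.mem_Iio, Finset.mem_Ici, Finset.mem_union, lt_or_ge]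
    · rw [Finset.disjoint_left]
      intro s hs1 hs2
      rw [Finset.mem_Iio] at hs1; rw [Finset.mem_Ici] at hs2
      exact absurd hs2 (not_le.mpr hs1)
  unfold ptailF; linarith

lemma coe_sub_one {i : Fin (M + 1)} (hi : i ≠ 0) : ((i - 1 : Fin (M + 1)) : ℕ) = (i : ℕ) - 1 := by
  rw [Fin.coe_sub_one, if_neg hi]

lemma sub_one_lt {i : Fin (M + 1)} (hi : i ≠ 0) : i - 1 < i := by
  rw [Fin.lt_def, coe_sub_one hi]
  have : (i : ℕ) ≠ 0 := fun h => hi (Fin.ext h)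
  omega

lemma ptail_one {i : Fin (M + 1)} (a : A) {k : Fin (M + 1)} (hk : (k : ℕ) < (i : ℕ)) :
    ptailF C.Mdp i a k = 1 := by
  rw [C.ptail_eq]
  have h : ∑ s ∈ Finset.Iio k, C.Mdp.p i a s = 0 := by
    apply Finset.sum_eq_zero
    intro s hs
    rw [Finset.mem_Iio] at hs
    exact C.hsf i s a (by rw [Fin.lt_def] at hs; omega)
  rw [h]; ring

lemma sum_Iio_self {i : Fin (M + 1)} (a : A) (hi : i ≠ 0) :
    ∑ s ∈ Finset.Iio i, C.Mdp.p i a s = C.Mdp.p i a (i - 1) := by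
  apply Finset.sum_eq_single_of_mem
  · rw [Finset.mem_Iio]; exact sub_one_lt hi
  · intro s hs hne
    rw [Finset.mem_Iio, Fin.lt_def] at hs
    apply C.hsf i s a
    have h1 : (s : ℕ) ≠ (i : ℕ) - 1 := by
      intro h
      exact hne (Fin.ext (by rw [coe_sub_one hi, ← h]))
    omega

lemma ptail_self {i : Fin (M + 1)} (a : A) (hi : i ≠ 0) :
    ptailF C.Mdp i a i = 1 - C.Mdp.p i a (i - 1) := by
  rw [C.ptail_eq, C.sum_Iio_self a hi]

/-- generic expansion: base step -/
lemma star0 (φ : Fin (M + 1) → ℝ) (b i : Fin (M + 1)) (a : A) :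
    ∑ j, C.Mdp.p i a j * cum b φ j = ∑ k ∈ Finset.Ioi b, ptailF C.Mdp i a k * φ k := by
  unfold cum ptailF
  simp only [Finset.mul_sum, Finset.sum_mul]
  rw [Finset.sum_sigma', Finset.sum_sigma']
  apply Finset.sum_nbij' (fun x => ⟨x.2, x.1⟩) (fun x => ⟨x.2, x.1⟩)
  · rintro ⟨j, k⟩ h
    simp only [Finset.mem_sigma, Finset.mem_univ, Finset.mem_Ioc, Finset.mem_Ioi,
      Finset.mem_Ici, true_and] at h ⊢
    tauto
  · rintro ⟨k, j⟩ h
    simp only [Finset.mem_sigma, Finset.mem_univ, Finset.mem_Ioc, Finset.mem_Ioi,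
      Finset.mem_Ici, true_and] at h ⊢
    tauto
  · rintro ⟨j, k⟩ _; rfl
  · rintro ⟨k, j⟩ _; rfl
  · rintro ⟨j, k⟩ _; ring

/-- expansion above the base -/
lemma starA (φ : Fin (M + 1) → ℝ) {b i : Fin (M + 1)} (hbi : b < i) (a : A) :
    ∑ j, C.Mdp.p i a j * cum b φ j
      = cum b φ i - C.Mdp.p i a (i - 1) * φ i
        + ∑ k ∈ Finset.Ioi i, ptailF C.Mdp i a k * φ k := by
  have hi0 : i ≠ 0 := by
    intro h; subst h; exact absurd hbi (by simp [Fin.lt_def])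
  rw [C.star0 φ b i a]
  have hsplit : Finset.Ioi b = Finset.Ioc b i ∪ Finset.Ioi i := by
    ext k
    simp only [Finset.mem_Ioi, Finset.mem_union, Finset.mem_Ioc]
    constructor
    · intro h
      rcases le_or_gt k i with h2 | h2
      · exact Or.inl ⟨h, h2⟩
      · exact Or.inr h2
    · rintro (⟨h1, _⟩ | h1)
      · exact h1
      · exact lt_trans hbi h1
  have hdisj : Disjoint (Finset.Ioc b i) (Finset.Ioi i) := by
    rw [Finset.disjoint_left]
    intro k h1 h2
    rw [Finset.mem_Ioc] at h1; rw [Finset.mem_Ioi] at h2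
    exact absurd h1.2 (not_le.mpr h2)
  rw [hsplit, Finset.sum_union hdisj]
  have hIoc : ∑ k ∈ Finset.Ioc b i, ptailF C.Mdp i a k * φ k
      = cum b φ i - C.Mdp.p i a (i - 1) * φ i := by
    have hmem : i ∈ Finset.Ioc b i := Finset.mem_Ioc.mpr ⟨hbi, le_refl i⟩
    rw [← Finset.add_sum_erase _ _ hmem]
    unfold cum
    rw [← Finset.add_sum_erase _ φ hmem]
    have h2 : ∀ k ∈ (Finset.Ioc b i).erase i, ptailF C.Mdp i a k * φ k = φ k := by
      intro k hk
      rw [Finset.mem_erase, Finset.mem_Ioc] at hk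
      have : (k : ℕ) < (i : ℕ) := by
        have h3 := lt_of_le_of_ne hk.2.2 hk.1
        rwa [Fin.lt_def] at h3
      rw [C.ptail_one a this, one_mul]
    rw [Finset.sum_congr rfl h2, C.ptail_self a hi0]
    ring
  rw [hIoc]

lemma cum_base (φ : Fin (M + 1) → ℝ) (b : Fin (M + 1)) : cum b φ b = 0 := by
  unfold cum; rw [Finset.Ioc_self, Finset.sum_empty]

lemma mem_B_iff {i : Fin (M + 1)} {a : A} : a ∈ C.B i ↔ 0 < C.Mdp.p i a (i - 1) := by
  rw [C.hBdef]; exact Iff.rfl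

lemma mem_Bbar_iff {i : Fin (M + 1)} (hi : i ≠ 0) {a : A} :
    a ∈ C.Bbar i ↔ C.Mdp.p i a (i - 1) = 0 := by
  rw [C.hBbardef, if_neg hi]; exact Iff.rfl

lemma Bbar_zero : C.Bbar 0 = Set.univ := by rw [C.hBbardef]; simp

lemma Bbar_zero_ne : (C.Bbar 0).Nonempty := by
  rw [C.Bbar_zero]; exact Set.univ_nonempty

lemma aa_pos (n : ℕ) {i : Fin (M + 1)} (hi : i ≠ 0) :
    0 < C.Mdp.p i (C.aa n i) (i - 1) :=
  C.mem_B_iff.mp (C.haa n i hi).1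

lemma Ioi_ne_zero {i k : Fin (M + 1)} (hk : k ∈ Finset.Ioi i) : k ≠ 0 := by
  rw [Finset.mem_Ioi] at hk
  intro h; subst h
  exact absurd hk (by simp [Fin.lt_def])

lemma tpos (n : ℕ) : ∀ i : Fin (M + 1), i ≠ 0 → 0 < C.t n i := by
  suffices h : ∀ m : ℕ, ∀ i : Fin (M + 1), M - (i : ℕ) < m → i ≠ 0 → 0 < C.t n i by
    intro i hi; exact h (M + 1) i (by omega) hi
  intro m
  induction m with
  | zero => intro i h; omega
  | succ m ih =>
    intro i hlt hi
    rw [C.ht n i hi]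
    apply div_pos _ (C.aa_pos n hi)
    have h1 : 0 ≤ ∑ k ∈ Finset.Ioi i, ptailF C.Mdp i (C.aa n i) k * C.t n k := by
      apply Finset.sum_nonneg
      intro k hk
      apply mul_nonneg (C.ptail_nonneg _ _ _)
      have hk2 : (i : ℕ) < (k : ℕ) := by
        rw [Finset.mem_Ioi, Fin.lt_def] at hk; exact hk
      have hkM : (k : ℕ) ≤ M := by omega
      exact le_of_lt (ih k (by omega) (Ioi_ne_zero hk))
    linarith

lemma t_nonneg (n : ℕ) (i : Fin (M + 1)) (hi : i ≠ 0) : 0 ≤ C.t n i :=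
  le_of_lt (C.tpos n i hi)

lemma den_ge_one (n : ℕ) (r : Fin (M + 1)) (a : A) : 1 ≤ C.den n r a := by
  unfold den
  have h1 : 0 ≤ ∑ k ∈ Finset.Ioi r, ptailF C.Mdp r a k * C.t n k :=
    Finset.sum_nonneg fun k hk =>
      mul_nonneg (C.ptail_nonneg _ _ _) (C.t_nonneg n k (Ioi_ne_zero hk))
  linarith

lemma den_pos (n : ℕ) (r : Fin (M + 1)) (a : A) : 0 < C.den n r a :=
  lt_of_lt_of_le one_pos (C.den_ge_one n r a)

lemma num_aa (n : ℕ) {i : Fin (M + 1)} (hi : i ≠ 0) :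
    C.num n i (C.aa n i) = C.Mdp.p i (C.aa n i) (i - 1) * C.y n i := by
  have h := (C.haa n i hi).2
  have hp := C.aa_pos n hi
  rw [div_eq_iff (ne_of_gt hp)] at h
  unfold num; rw [h]; ring

lemma y_le (n : ℕ) {i : Fin (M + 1)} (hi : i ≠ 0) {a : A} (ha : a ∈ C.B i) :
    C.Mdp.p i a (i - 1) * C.y n i ≤ C.num n i a := by
  have hp : 0 < C.Mdp.p i a (i - 1) := C.mem_B_iff.mp ha
  have h1 : C.y n i ≤ C.num n i a / C.Mdp.p i a (i - 1) := by
    rw [C.hy n i hi]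
    exact ciInf_le (Finite.bddBelow_range _) (⟨a, ha⟩ : C.B i)
  calc C.Mdp.p i a (i - 1) * C.y n i
      ≤ C.Mdp.p i a (i - 1) * (C.num n i a / C.Mdp.p i a (i - 1)) :=
        mul_le_mul_of_nonneg_left h1 (le_of_lt hp)
    _ = C.num n i a := by field_simp

lemma u_le (n : ℕ) {r : Fin (M + 1)} (hne : (C.Bbar r).Nonempty) {a : A}
    (ha : a ∈ C.Bbar r) : C.u n r * C.den n r a ≤ C.num n r a := by
  have h1 : C.u n r ≤ C.num n r a / C.den n r a := by
    rw [(C.hu n r hne).2.1]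
    exact ciInf_le (Finite.bddBelow_range _) (⟨a, ha⟩ : C.Bbar r)
  have hd := C.den_pos n r a
  calc C.u n r * C.den n r a ≤ (C.num n r a / C.den n r a) * C.den n r a :=
        mul_le_mul_of_nonneg_right h1 (le_of_lt hd)
    _ = C.num n r a := by field_simp

lemma num_ar (n : ℕ) {r : Fin (M + 1)} (hne : (C.Bbar r).Nonempty) :
    C.num n r (C.ar n r) = C.u n r * C.den n r (C.ar n r) := by
  have h := (C.hu n r hne).2.2
  have hd := C.den_pos n r (C.ar n r)
  unfold den at hd
  rw [div_eq_iff (ne_of_gt hd)] at h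
  unfold num den
  exact h

lemma t_eq (n : ℕ) {i : Fin (M + 1)} (hi : i ≠ 0) :
    C.Mdp.p i (C.aa n i) (i - 1) * C.t n i
      = 1 + ∑ k ∈ Finset.Ioi i, ptailF C.Mdp i (C.aa n i) k * C.t n k := by
  have h := C.ht n i hi
  have hp := C.aa_pos n hi
  rw [h, mul_div_cancel₀ _ (ne_of_gt hp)]

lemma Pmat_apply (d' : Fin (M + 1) → A) (i j : Fin (M + 1)) :
    C.Mdp.Pmat d' i j = C.Mdp.p i (d' i) j := rfl

lemma Pmat_rowstoch (d' : Fin (M + 1) → A) :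
    (∀ i j, 0 ≤ C.Mdp.Pmat d' i j) ∧ ∀ i, ∑ j, C.Mdp.Pmat d' i j = 1 :=
  ⟨fun i j => C.Mdp.p_nonneg i (d' i) j, fun i => C.Mdp.p_sum_one i (d' i)⟩

/-- the relative value (bias) vector built from `y n` -/
def hvec (n : ℕ) : Fin (M + 1) → ℝ := cum 0 (C.y n)

lemma pos_of_ne_zero {i : Fin (M + 1)} (hi : i ≠ 0) : (0 : Fin (M + 1)) < i :=
  Fin.pos_of_ne_zero hi

/-- Bellman residual identity, case `d' i ∈ B̄ᵢ` (or `i = 0`). -/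
lemma res_bar (n : ℕ) (d' : Fin (M + 1) → A) {i : Fin (M + 1)}
    (hp : i = 0 ∨ C.Mdp.p i (d' i) (i - 1) = 0) :
    C.Mdp.c i (d' i) + (C.Mdp.Pmat d').mulVec (C.hvec n) i
      = C.g n + C.hvec n i + C.num n i (d' i) := by
  have hmv : (C.Mdp.Pmat d').mulVec (C.hvec n) i
      = ∑ j, C.Mdp.p i (d' i) j * C.hvec n j := by
    unfold Matrix.mulVec dotProduct; rfl
  rcases hp with h0 | hpz
  · subst h0
    rw [hmv]
    show C.Mdp.c 0 (d' 0) + ∑ j, C.Mdp.p 0 (d' 0) j * cum 0 (C.y n) j = _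
    rw [C.star0 (C.y n) 0 0 (d' 0)]
    unfold num hvec
    rw [cum_base]
    ring
  · by_cases h0 : i = 0
    · subst h0
      rw [hmv]
      show C.Mdp.c 0 (d' 0) + ∑ j, C.Mdp.p 0 (d' 0) j * cum 0 (C.y n) j = _
      rw [C.star0 (C.y n) 0 0 (d' 0)]
      unfold num hvec
      rw [cum_base]
      ring
    · rw [hmv]
      show C.Mdp.c i (d' i) + ∑ j, C.Mdp.p i (d' i) j * cum 0 (C.y n) j = _
      rw [C.starA (C.y n) (pos_of_ne_zero h0) (d' i), hpz]
      unfold num hvec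
      ring

/-- Bellman residual identity, general case `i ≠ 0`. -/
lemma res_gen (n : ℕ) (d' : Fin (M + 1) → A) {i : Fin (M + 1)} (hi : i ≠ 0) :
    C.Mdp.c i (d' i) + (C.Mdp.Pmat d').mulVec (C.hvec n) i
      = C.g n + C.hvec n i
        + (C.num n i (d' i) - C.Mdp.p i (d' i) (i - 1) * C.y n i) := by
  have hmv : (C.Mdp.Pmat d').mulVec (C.hvec n) i
      = ∑ j, C.Mdp.p i (d' i) j * C.hvec n j := by
    unfold Matrix.mulVec dotProduct; rfl
  rw [hmv]
  show C.Mdp.c i (d' i) + ∑ j, C.Mdp.p i (d' i) j * cum 0 (C.y n) j = _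
  rw [C.starA (C.y n) (pos_of_ne_zero hi) (d' i)]
  unfold num hvec
  ring

/-- superharmonicity of the bias vector when all `u n r ≥ 0` -/
lemma super_ge (n : ℕ) (hU : ∀ r, (C.Bbar r).Nonempty → 0 ≤ C.u n r)
    (d' : Fin (M + 1) → A) (i : Fin (M + 1)) :
    C.g n + C.hvec n i ≤ C.Mdp.c i (d' i) + (C.Mdp.Pmat d').mulVec (C.hvec n) i := by
  by_cases h0 : i = 0
  · subst h0
    rw [C.res_bar n d' (Or.inl rfl)]
    have hbar : d' 0 ∈ C.Bbar 0 := by rw [C.Bbar_zero]; trivial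
    have h1 := C.u_le n C.Bbar_zero_ne hbar
    have h2 : 0 ≤ C.u n 0 * C.den n 0 (d' 0) :=
      mul_nonneg (hU 0 C.Bbar_zero_ne) (le_of_lt (C.den_pos n 0 (d' 0)))
    linarith
  · by_cases hpz : C.Mdp.p i (d' i) (i - 1) = 0
    · rw [C.res_bar n d' (Or.inr hpz)]
      have hbar : d' i ∈ C.Bbar i := (C.mem_Bbar_iff h0).mpr hpz
      have hne : (C.Bbar i).Nonempty := ⟨d' i, hbar⟩
      have h1 := C.u_le n hne hbar
      have h2 : 0 ≤ C.u n i * C.den n i (d' i) :=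
        mul_nonneg (hU i hne) (le_of_lt (C.den_pos n i (d' i)))
      linarith
    · rw [C.res_gen n d' h0]
      have hpos : 0 < C.Mdp.p i (d' i) (i - 1) :=
        lt_of_le_of_ne (C.Mdp.p_nonneg i (d' i) (i - 1)) (Ne.symm hpz)
      have h1 := C.y_le n h0 (C.mem_B_iff.mpr hpos)
      linarith

/-- extra slack at a `B̄` state -/
lemma super_slack (n : ℕ) (d' : Fin (M + 1) → A) {i : Fin (M + 1)}
    (hbar : d' i ∈ C.Bbar i) (hne : (C.Bbar i).Nonempty) (hU0 : 0 ≤ C.u n i) :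
    C.g n + C.hvec n i + C.u n i
      ≤ C.Mdp.c i (d' i) + (C.Mdp.Pmat d').mulVec (C.hvec n) i := by
  have h1 := C.u_le n hne hbar
  have h2 : C.u n i ≤ C.u n i * C.den n i (d' i) := by
    calc C.u n i = C.u n i * 1 := by ring
      _ ≤ C.u n i * C.den n i (d' i) :=
        mul_le_mul_of_nonneg_left (C.den_ge_one n i (d' i)) hU0
  by_cases h0 : i = 0
  · subst h0; rw [C.res_bar n d' (Or.inl rfl)]; linarith
  · have hpz : C.Mdp.p i (d' i) (i - 1) = 0 := (C.mem_Bbar_iff h0).mp hbar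
    rw [C.res_bar n d' (Or.inr hpz)]; linarith

lemma avgCost_eq (d' : Fin (M + 1) → A) (j : Fin (M + 1)) :
    C.Mdp.avgCost d' j
      = Filter.limsup (avgSeq (C.Mdp.Pmat d') (C.Mdp.cvec d') j) Filter.atTop := rfl

lemma sub_one_lt_of {r j : Fin (M + 1)} (hr : r ≠ 0) (hj : j ≠ r - 1)
    (h : (r : ℕ) ≤ (j : ℕ) + 1) : r ≤ j := by
  have h1 : ((r - 1 : Fin (M + 1)) : ℕ) = (r : ℕ) - 1 := coe_sub_one hr
  have h2 : (j : ℕ) ≠ (r : ℕ) - 1 := by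
    intro he; exact hj (Fin.ext (by rw [h1, he]))
  have h3 : (r : ℕ) ≠ 0 := fun he => hr (Fin.ext he)
  rw [Fin.le_def]; omega

lemma closed_above (n : ℕ) {r : Fin (M + 1)} (hrne : (C.Bbar r).Nonempty)
    (hdr : C.d (n + 1) r = C.ar n r) :
    MClosed (C.Mdp.Pmat (C.d (n + 1))) {i | r ≤ i} := by
  intro i hi j hpij
  simp only [Set.mem_setOf_eq] at hi ⊢
  rw [C.Pmat_apply] at hpij
  have hij : (i : ℕ) ≤ (j : ℕ) + 1 := by
    by_contra h
    exact hpij (C.hsf i j _ (by omega))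
  rcases eq_or_lt_of_le hi with he | hlt
  · obtain rfl : r = i := he
    by_cases hr0 : r = 0
    · rw [hr0]; exact Fin.zero_le j
    · have har : C.ar n r ∈ C.Bbar r := (C.hu n r hrne).1
      have hpz : C.Mdp.p r (C.ar n r) (r - 1) = 0 := (C.mem_Bbar_iff hr0).mp har
      apply sub_one_lt_of hr0 _ hij
      intro hj
      rw [hdr] at hpij
      exact hpij (by rw [hj]; exact hpz)
  · rw [Fin.le_def]
    rw [Fin.lt_def] at hlt
    omega

/-- Bellman equalities satisfied by `d (n+1)` on states `≥ r`. -/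
lemma step_eqs (n : ℕ) {r : Fin (M + 1)} (hrne : (C.Bbar r).Nonempty)
    (hdr : C.d (n + 1) r = C.ar n r)
    (hdi : ∀ i : Fin (M + 1), r < i → C.d (n + 1) i = C.aa n i)
    {i : Fin (M + 1)} (hi : r ≤ i) :
    C.Mdp.cvec (C.d (n + 1)) i + (C.Mdp.Pmat (C.d (n + 1))).mulVec (C.hvec n) i
      = C.g n + C.hvec n i
        + (if i = r then C.u n r * C.den n r (C.ar n r) else 0) := by
  simp only [MDP.cvec]
  rcases eq_or_lt_of_le hi with he | hlt
  · obtain rfl : r = i := he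
    rw [if_pos rfl]
    have hbar : C.d (n + 1) r ∈ C.Bbar r := by rw [hdr]; exact (C.hu n r hrne).1
    have hcase : r = 0 ∨ C.Mdp.p r (C.d (n + 1) r) (r - 1) = 0 := by
      by_cases h0 : r = 0
      · exact Or.inl h0
      · exact Or.inr ((C.mem_Bbar_iff h0).mp hbar)
    have h1 := C.res_bar n (C.d (n + 1)) hcase
    rw [h1, hdr, C.num_ar n hrne]
  · have hi0 : i ≠ 0 := by
      intro h; subst h
      exact absurd hlt (by simp [Fin.lt_def])
    have hne : i ≠ r := (ne_of_lt hlt).symm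
    rw [if_neg hne]
    have h1 := C.res_gen n (C.d (n + 1)) hi0
    rw [h1, hdi i hlt, C.num_aa n hi0]
    ring

/-- the expected-return-time equalities satisfied by `d (n+1)` on states `≥ r`. -/
lemma step_w (n : ℕ) {r : Fin (M + 1)} (hrne : (C.Bbar r).Nonempty)
    (hdr : C.d (n + 1) r = C.ar n r)
    (hdi : ∀ i : Fin (M + 1), r < i → C.d (n + 1) i = C.aa n i)
    {i : Fin (M + 1)} (hi : r ≤ i) :
    (1 : ℝ) + (C.Mdp.Pmat (C.d (n + 1))).mulVec (cum r (C.t n)) i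
      = 0 + cum r (C.t n) i
        + (if i = r then C.den n r (C.ar n r) else 0) := by
  have hmv : (C.Mdp.Pmat (C.d (n + 1))).mulVec (cum r (C.t n)) i
      = ∑ j, C.Mdp.p i (C.d (n + 1) i) j * cum r (C.t n) j := by
    unfold Matrix.mulVec dotProduct; rfl
  rcases eq_or_lt_of_le hi with he | hlt
  · obtain rfl : r = i := he
    rw [if_pos rfl, hmv, C.star0 (C.t n) r r _, hdr]
    unfold den
    rw [cum_base]
    ring
  · have hi0 : i ≠ 0 := by
      intro h; subst h
      exact absurd hlt (by simp [Fin.lt_def])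
    have hne : i ≠ r := (ne_of_lt hlt).symm
    rw [if_neg hne, hmv, C.starA (C.t n) hlt _, hdi i hlt]
    have h2 := C.t_eq n hi0
    linarith

end Ctx

section Generic2
variable {S : Type*} [Fintype S] [DecidableEq S]
set_option linter.unusedSectionVars false

lemma bound_tele {P : Matrix S S ℝ} (hP : RowStoch P) (v : S → ℝ) :
    ∃ Bv : ℝ, 0 ≤ Bv ∧ ∀ (N : ℕ) (j : S), |(P ^ N).mulVec v j| ≤ Bv := by
  obtain ⟨Bv, hBv0, hBv⟩ := exists_abs_bound v
  exact ⟨Bv, hBv0, fun N j => abs_mulVec_le (hP.pow N) hBv j⟩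

lemma mulVec_nonneg {P : Matrix S S ℝ} (hP : ∀ i j, 0 ≤ P i j) {v : S → ℝ}
    (hv : ∀ i, 0 ≤ v i) (j : S) : 0 ≤ P.mulVec v j :=
  Finset.sum_nonneg fun i _ => mul_nonneg (hP j i) (hv i)

lemma avg_lb {P : Matrix S S ℝ} (hP : RowStoch P) {c : S → ℝ} {j : S} {g C0 : ℝ}
    (hlb : ∀ n : ℕ, (n : ℝ) * g - C0 ≤ ∑ t ∈ Finset.range n, (P ^ t).mulVec c j) :
    g ≤ Filter.limsup (avgSeq P c j) Filter.atTop := by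
  apply le_limsup_avg hP c j (C := C0)
  filter_upwards [eventually_ge_atTop 1] with n hn
  have hn0 : (0:ℝ) < n := by
    have : (1:ℝ) ≤ n := by exact_mod_cast hn
    linarith
  unfold avgSeq
  have h1 := hlb n
  have h2 : (n:ℝ)⁻¹ * ((n:ℝ) * g - C0) ≤ (n:ℝ)⁻¹ * ∑ t ∈ Finset.range n, (P ^ t).mulVec c j :=
    mul_le_mul_of_nonneg_left h1 (le_of_lt (inv_pos.mpr hn0))
  have h3 : (n:ℝ)⁻¹ * ((n:ℝ) * g - C0) = g - C0 * (n:ℝ)⁻¹ := by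
    field_simp
  linarith

section Reach
variable {S : Type*} [Fintype S] [DecidableEq S]
set_option linter.unusedSectionVars false

lemma entry_nonneg_pow {Q : Matrix S S ℝ} (hQ : ∀ i j, 0 ≤ Q i j) (n : ℕ) :
    ∀ i j, 0 ≤ (Q ^ n) i j := by
  induction n with
  | zero => intro i j; by_cases h : i = j <;> simp [Matrix.one_apply, h]
  | succ n ih =>
    intro i j
    rw [pow_succ, Matrix.mul_apply]
    exact Finset.sum_nonneg fun k _ => mul_nonneg (ih i k) (hQ k j)

lemma mulVec_mono {Q : Matrix S S ℝ} (hQ : ∀ i j, 0 ≤ Q i j) {v w : S → ℝ}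
    (hvw : ∀ i, v i ≤ w i) (j : S) : Q.mulVec v j ≤ Q.mulVec w j :=
  Finset.sum_le_sum fun i _ => mul_le_mul_of_nonneg_left (hvw i) (hQ j i)

lemma abs_mulVec_le_of_nonneg {Q : Matrix S S ℝ} (hQ : ∀ i j, 0 ≤ Q i j) {v : S → ℝ}
    {Bv : ℝ} (hv : ∀ i, |v i| ≤ Bv) (j : S) :
    |Q.mulVec v j| ≤ Bv * Q.mulVec (fun _ => 1) j := by
  calc |Q.mulVec v j| ≤ ∑ i, |Q j i * v i| := Finset.abs_sum_le_sum_abs _ _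
    _ ≤ ∑ i, Q j i * Bv := by
        apply Finset.sum_le_sum
        intro i _
        rw [abs_mul, abs_of_nonneg (hQ j i)]
        exact mul_le_mul_of_nonneg_left (hv i) (hQ j i)
    _ = Bv * Q.mulVec (fun _ => 1) j := by
        unfold Matrix.mulVec dotProduct
        rw [Finset.mul_sum]
        exact Finset.sum_congr rfl fun i _ => by ring

lemma path_of_pow_pos {P : Matrix S S ℝ} (hP : ∀ i j, 0 ≤ P i j) :
    ∀ (n : ℕ) (i j : S), 0 < (P ^ n) i j →
      ∃ x : ℕ → S, x 0 = i ∧ x n = j ∧ ∀ t, t < n → P (x t) (x (t + 1)) ≠ 0 := by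
  intro n
  induction n with
  | zero =>
    intro i j h
    have hij : i = j := by
      by_contra hne
      rw [pow_zero, Matrix.one_apply, if_neg hne] at h
      exact lt_irrefl 0 h
    exact ⟨fun _ => i, rfl, hij ▸ rfl, fun t ht => absurd ht (by omega)⟩
  | succ n ih =>
    intro i j h
    rw [pow_succ', Matrix.mul_apply] at h
    have hex : ∃ k, 0 < P i k * (P ^ n) k j := by
      by_contra hno
      push_neg at hno
      have h2 : ∑ k, P i k * (P ^ n) k j ≤ 0 :=
        Finset.sum_nonpos fun k _ => hno k
      linarith
    obtain ⟨k, hk⟩ := hex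
    have hik : P i k ≠ 0 := by
      intro h0; rw [h0, zero_mul] at hk; exact lt_irrefl 0 hk
    have hkj : 0 < (P ^ n) k j := by
      rcases lt_or_eq_of_le (entry_nonneg_pow hP n k j) with h1 | h1
      · exact h1
      · exact absurd hk (by rw [← h1, mul_zero]; exact lt_irrefl 0)
    obtain ⟨x, hx0, hxn, hxs⟩ := ih k j hkj
    refine ⟨fun s => if s = 0 then i else x (s - 1), by simp, ?_, ?_⟩
    · simp only [Nat.succ_ne_zero, if_neg, Nat.add_sub_cancel]
      exact hxn
    · intro s hs
      rcases Nat.eq_zero_or_pos s with h0 | h0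
      · subst h0
        simpa [hx0] using hik
      · have h1 : s ≠ 0 := by omega
        have h2 : s + 1 ≠ 0 := by omega
        simp only [if_neg h1, if_neg h2]
        have h3 : s + 1 - 1 = (s - 1) + 1 := by omega
        rw [h3]
        exact hxs (s - 1) (by omega)

end Reach

end Generic2

namespace Ctx

variable {M : ℕ} {A : Type*} [Fintype A] [Nonempty A] (C : Ctx M A)

/-- Evaluation: the policy `d (n+1)` achieves average cost `g (n+1)` from every state `≥ r`,
and visits `r` with positive frequency. -/
lemma eval (n : ℕ) :
    ∃ z : Fin (M + 1), (C.Bbar z).Nonempty ∧ C.d (n + 1) z ∈ C.Bbar z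
      ∧ C.g (n + 1) = C.g n + C.u n z
      ∧ (∀ r', (C.Bbar r').Nonempty → C.g (n + 1) ≤ C.g n + C.u n r')
      ∧ (∀ j, z ≤ j → C.Mdp.avgCost (C.d (n + 1)) j = C.g (n + 1))
      ∧ (∃ β > 0, ∀ᶠ N : ℕ in atTop,
          β ≤ (N : ℝ)⁻¹ * ∑ t ∈ Finset.range N, ((C.Mdp.Pmat (C.d (n + 1))) ^ t) z z) := by
  obtain ⟨r, hrne, hg, hmin, -, hdr, hdi⟩ := C.hstep n
  set d1 := C.d (n + 1) with hd1
  set P := C.Mdp.Pmat d1 with hP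
  have hPst : RowStoch P := C.Pmat_rowstoch d1
  set F : Set (Fin (M + 1)) := {i | r ≤ i} with hF
  have hcl : MClosed P F := C.closed_above n hrne hdr
  set u0 := C.u n r with hu0
  set D0 := C.den n r (C.ar n r) with hD0
  have hD1 : 1 ≤ D0 := C.den_ge_one n r (C.ar n r)
  set hv := C.hvec n with hhv
  set wv := cum r (C.t n) with hwv
  set sv : Fin (M + 1) → ℝ := fun i => if i = r then D0 else 0 with hsv
  -- telescopes
  have heq1 : ∀ i ∈ F, C.Mdp.cvec d1 i + P.mulVec hv i = C.g n + hv i + u0 * sv i := by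
    intro i hi
    have := C.step_eqs n hrne hdr hdi (hi : r ≤ i)
    rw [this, hsv]
    by_cases h : i = r <;> simp [h, hhv, hu0, hD0]
  have heq2 : ∀ i ∈ F, (fun _ : Fin (M+1) => (1:ℝ)) i + P.mulVec wv i = 0 + wv i + sv i := by
    intro i hi
    have := C.step_w n hrne hdr hdi (hi : r ≤ i)
    rw [this, hsv]
  obtain ⟨Bh, hBh0, hBh⟩ := bound_tele hPst hv
  obtain ⟨Bw, hBw0, hBw⟩ := bound_tele hPst wv
  have htel1 : ∀ (j : Fin (M+1)), j ∈ F → ∀ N : ℕ,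
      ∑ t ∈ Finset.range N, (P ^ t).mulVec (C.Mdp.cvec d1) j
        = N * C.g n + hv j - (P ^ N).mulVec hv j
          + ∑ t ∈ Finset.range N, (P ^ t).mulVec (fun i => u0 * sv i) j := by
    intro j hj N
    exact telescope hPst hcl _ hv _ (C.g n) heq1 hj N
  have htel2 : ∀ (j : Fin (M+1)), j ∈ F → ∀ N : ℕ,
      ∑ t ∈ Finset.range N, (P ^ t).mulVec sv j
        = N - wv j + (P ^ N).mulVec wv j := by
    intro j hj N
    have h1 := telescope hPst hcl _ wv sv 0 heq2 hj N
    have h2 : ∑ t ∈ Finset.range N, (P ^ t).mulVec (fun _ => (1:ℝ)) j = N := by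
      have : ∀ t ∈ Finset.range N, (P ^ t).mulVec (fun _ => (1:ℝ)) j = 1 := by
        intro t _; exact mulVec_const (hPst.pow t) 1 j
      rw [Finset.sum_congr rfl this]
      simp
    rw [h2] at h1
    linarith
  have hsmul : ∀ (N : ℕ) (j : Fin (M+1)),
      (P ^ N).mulVec (fun i => u0 * sv i) j = u0 * (P ^ N).mulVec sv j := by
    intro N j
    have : (fun i => u0 * sv i) = u0 • sv := by funext i; simp
    rw [this, Matrix.mulVec_smul]
    simp
  -- combine
  have hmain : ∀ (j : Fin (M+1)), j ∈ F → ∀ N : ℕ,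
      ∑ t ∈ Finset.range N, (P ^ t).mulVec (C.Mdp.cvec d1) j
        = N * (C.g n + u0)
          + (hv j - (P ^ N).mulVec hv j + u0 * ((P ^ N).mulVec wv j - wv j)) := by
    intro j hj N
    rw [htel1 j hj N]
    have h3 : ∑ t ∈ Finset.range N, (P ^ t).mulVec (fun i => u0 * sv i) j
        = u0 * ∑ t ∈ Finset.range N, (P ^ t).mulVec sv j := by
      rw [Finset.mul_sum]
      exact Finset.sum_congr rfl fun t _ => hsmul t j
    rw [h3, htel2 j hj N]
    ring
  -- average cost
  have havg : ∀ j, r ≤ j → C.Mdp.avgCost d1 j = C.g (n + 1) := by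
    intro j hj
    rw [C.avgCost_eq]
    apply limsup_avg_eq (C := 2 * Bh + |u0| * (2 * Bw))
    intro N
    rw [hmain j hj N, hg]
    have e0 : ↑N * (C.g n + u0)
        + (hv j - (P ^ N).mulVec hv j + u0 * ((P ^ N).mulVec wv j - wv j))
        - ↑N * (C.g n + u0)
        = hv j - (P ^ N).mulVec hv j + u0 * ((P ^ N).mulVec wv j - wv j) := by ring
    rw [e0]
    have e1 : |hv j| ≤ Bh := by
      have h5 := hBh 0 j
      rwa [pow_zero, Matrix.one_mulVec] at h5
    have e2 : |(P ^ N).mulVec hv j| ≤ Bh := hBh N j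
    have e3 : |wv j| ≤ Bw := by
      have h5 := hBw 0 j
      rwa [pow_zero, Matrix.one_mulVec] at h5
    have e4 : |(P ^ N).mulVec wv j| ≤ Bw := hBw N j
    have q1 : |hv j - (P ^ N).mulVec hv j| ≤ Bh + Bh := by
      rw [sub_eq_add_neg]
      exact (abs_add_le _ _).trans (by rw [abs_neg]; linarith)
    have q2 : |(P ^ N).mulVec wv j - wv j| ≤ Bw + Bw := by
      rw [sub_eq_add_neg]
      exact (abs_add_le _ _).trans (by rw [abs_neg]; linarith)
    have q3 : |u0 * ((P ^ N).mulVec wv j - wv j)| ≤ |u0| * (2 * Bw) := by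
      rw [abs_mul]
      apply mul_le_mul_of_nonneg_left _ (abs_nonneg u0)
      linarith
    calc |hv j - (P ^ N).mulVec hv j + u0 * ((P ^ N).mulVec wv j - wv j)|
        ≤ |hv j - (P ^ N).mulVec hv j| + |u0 * ((P ^ N).mulVec wv j - wv j)| := abs_add_le _ _
      _ ≤ 2 * Bh + |u0| * (2 * Bw) := by linarith
  -- frequency
  have hfreq : ∃ β > 0, ∀ᶠ N : ℕ in atTop,
      β ≤ (N : ℝ)⁻¹ * ∑ t ∈ Finset.range N, (P ^ t) r r := by
    have hD0pos : (0:ℝ) < D0 := lt_of_lt_of_le one_pos hD1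
    have hsvind : sv = D0 • ind r := by
      funext i
      by_cases h : i = r <;> simp [hsv, ind, h]
    have hsv' : ∀ (τ : ℕ) (j : Fin (M + 1)), (P ^ τ).mulVec sv j = D0 * (P ^ τ) j r := by
      intro τ j
      rw [hsvind, Matrix.mulVec_smul]
      have := mulVec_ind (P ^ τ) r j
      simp only [Pi.smul_apply, smul_eq_mul, this]
    have hwr : wv r = 0 := cum_base _ _
    have hΦ : ∀ N : ℕ, D0 * ∑ t ∈ Finset.range N, (P ^ t) r r
        = N + (P ^ N).mulVec wv r := by
      intro N
      have h5 := htel2 r (le_refl r) N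
      have h6 : ∑ t ∈ Finset.range N, (P ^ t).mulVec sv r
          = D0 * ∑ t ∈ Finset.range N, (P ^ t) r r := by
        rw [Finset.mul_sum]
        exact Finset.sum_congr rfl fun τ _ => hsv' τ r
      rw [h6, hwr] at h5
      rw [h5]; ring
    refine ⟨1 / (2 * D0), by positivity, ?_⟩
    filter_upwards [eventually_ge_atTop (Nat.ceil (2 * Bw) + 1)] with N hN
    have hNR : 2 * Bw + 1 ≤ (N : ℝ) := by
      have h7 : 2 * Bw ≤ (Nat.ceil (2 * Bw) : ℝ) := Nat.le_ceil _
      have h8 : (Nat.ceil (2 * Bw) + 1 : ℝ) ≤ (N : ℝ) := by exact_mod_cast hN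
      linarith
    have hN0 : (0:ℝ) < N := by linarith [hNR, hBw0]
    have hb : |(P ^ N).mulVec wv r| ≤ Bw := hBw N r
    have hΦlb : (N : ℝ) - Bw ≤ D0 * ∑ t ∈ Finset.range N, (P ^ t) r r := by
      rw [hΦ N]
      have := abs_le.mp hb
      linarith [this.1]
    rw [inv_mul_eq_div, le_div_iff₀ hN0, div_mul_eq_mul_div, div_le_iff₀
      (by positivity : (0:ℝ) < 2 * D0)]
    nlinarith [hΦlb, hNR, hBw0]
  exact ⟨r, hrne, by rw [hdr]; exact (C.hu n r hrne).1, hg, hmin, havg, hfreq⟩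

/-- Invariant: `g n` is attained as average cost at a B̄-state visited with positive frequency. -/
def Jinv (n : ℕ) : Prop :=
  ∃ (ds : Fin (M + 1) → A) (z : Fin (M + 1)) (β : ℝ),
    C.Mdp.avgCost ds z = C.g n ∧ ds z ∈ C.Bbar z ∧ (C.Bbar z).Nonempty ∧ 0 < β ∧
    ∀ᶠ N : ℕ in atTop, β ≤ (N : ℝ)⁻¹ * ∑ t ∈ Finset.range N, ((C.Mdp.Pmat ds) ^ t) z z

lemma J_zero : C.Jinv 0 := by
  obtain ⟨⟨E, hE, -⟩, havg⟩ := C.hg0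
  obtain ⟨hEne, hEcomm, hEclosed⟩ := hE
  obtain ⟨m, hmE, hmmin⟩ := Set.exists_min_image E id E.toFinite hEne
  have hPst : RowStoch (C.Mdp.Pmat (C.d 0)) := C.Pmat_rowstoch (C.d 0)
  have hmem : C.d 0 m ∈ C.Bbar m := by
    by_cases h0 : m = 0
    · rw [h0, C.Bbar_zero]; trivial
    · rw [C.mem_Bbar_iff h0]
      by_contra hne
      have hpos : 0 < C.Mdp.p m (C.d 0 m) (m - 1) :=
        lt_of_le_of_ne (C.Mdp.p_nonneg _ _ _) (Ne.symm hne)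
      have h1 : m - 1 ∈ E := hEclosed m hmE (m - 1) hpos
      have h2 := hmmin (m - 1) h1
      exact absurd (lt_of_le_of_lt h2 (sub_one_lt h0)) (lt_irrefl m)
  have hcl : MClosed (C.Mdp.Pmat (C.d 0)) E := by
    intro i hi j hpij
    exact hEclosed i hi j (lt_of_le_of_ne (hPst.1 i j) (Ne.symm hpij))
  have hreach : ∀ i ∈ E, ∃ l : ℕ, 0 < ((C.Mdp.Pmat (C.d 0)) ^ l) i m :=
    fun i hi => hEcomm i hi m hmE
  obtain ⟨β, hβ, hev⟩ := freq_pos hPst hcl hmE hmE hreach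
  have hne : (C.Bbar m).Nonempty := ⟨C.d 0 m, hmem⟩
  exact ⟨C.d 0, m, β, (havg m).symm, hmem, hne, hβ, hev⟩

lemma J_succ (n : ℕ) : C.Jinv (n + 1) := by
  obtain ⟨z, hne, hmem, -, -, havg, β, hβ, hev⟩ := C.eval n
  exact ⟨C.d (n + 1), z, β, havg z (le_refl z), hmem, hne, hβ, hev⟩

lemma Jinv_all (n : ℕ) : C.Jinv n := by
  cases n with
  | zero => exact C.J_zero
  | succ n => exact C.J_succ n

/-- Minimality: if all `u n r ≥ 0` then `g n` is a lower bound for every average cost. -/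
lemma min_avg (n : ℕ) (hU : ∀ r, (C.Bbar r).Nonempty → 0 ≤ C.u n r)
    (d' : Fin (M + 1) → A) (j : Fin (M + 1)) : C.g n ≤ C.Mdp.avgCost d' j := by
  set P' := C.Mdp.Pmat d' with hP'
  have hPst : RowStoch P' := C.Pmat_rowstoch d'
  set hv := C.hvec n with hhv
  set s : Fin (M + 1) → ℝ :=
    fun i => C.Mdp.c i (d' i) + P'.mulVec hv i - C.g n - hv i with hs
  have hs0 : ∀ i, 0 ≤ s i := by
    intro i
    have := C.super_ge n hU d' i
    simp only [hs]
    linarith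
  have heq : ∀ i ∈ (Set.univ : Set (Fin (M + 1))),
      C.Mdp.cvec d' i + P'.mulVec hv i = C.g n + hv i + s i := by
    intro i _
    simp only [hs, MDP.cvec]
    ring
  have hcl : MClosed P' (Set.univ : Set (Fin (M + 1))) := fun i _ j _ => trivial
  obtain ⟨Bh, hBh0, hBh⟩ := bound_tele hPst hv
  rw [C.avgCost_eq]
  apply avg_lb hPst (C0 := 2 * Bh)
  intro N
  have h1 := telescope hPst hcl _ hv s (C.g n) heq (Set.mem_univ j) N
  have h2 : 0 ≤ ∑ t ∈ Finset.range N, (P' ^ t).mulVec s j :=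
    Finset.sum_nonneg fun t _ => mulVec_nonneg (hPst.pow t).1 hs0 j
  have e1 : |hv j| ≤ Bh := by
    have h5 := hBh 0 j
    rwa [pow_zero, Matrix.one_mulVec] at h5
  have e2 : |(P' ^ N).mulVec hv j| ≤ Bh := hBh N j
  have := abs_le.mp e1
  have := abs_le.mp e2
  rw [h1]
  linarith [this.1]

/-- The dichotomy: `g` never increases. -/
lemma g_mono (n : ℕ) : C.g (n + 1) ≤ C.g n := by
  by_contra hgt
  push_neg at hgt
  obtain ⟨-, -, -, -, hmin, -, -⟩ := C.eval n
  have hUpos : ∀ r, (C.Bbar r).Nonempty → 0 < C.u n r := by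
    intro r hr
    have := hmin r hr
    linarith
  obtain ⟨ds, z, β, havg, hmem, hne, hβ, hev⟩ := C.Jinv_all n
  set P' := C.Mdp.Pmat ds with hP'
  have hPst : RowStoch P' := C.Pmat_rowstoch ds
  set hv := C.hvec n with hhv
  set s : Fin (M + 1) → ℝ :=
    fun i => C.Mdp.c i (ds i) + P'.mulVec hv i - C.g n - hv i with hs
  have hs0 : ∀ i, 0 ≤ s i := by
    intro i
    have := C.super_ge n (fun r hr => le_of_lt (hUpos r hr)) ds i
    simp only [hs]
    linarith
  set ε := C.u n z with hε
  have hεpos : 0 < ε := hUpos z hne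
  have hsz : ε ≤ s z := by
    have := C.super_slack n ds hmem hne (le_of_lt hεpos)
    simp only [hs]
    linarith
  have heq : ∀ i ∈ (Set.univ : Set (Fin (M + 1))),
      C.Mdp.cvec ds i + P'.mulVec hv i = C.g n + hv i + s i := by
    intro i _
    simp only [hs, MDP.cvec]
    ring
  have hcl : MClosed P' (Set.univ : Set (Fin (M + 1))) := fun i _ j _ => trivial
  obtain ⟨Bh, hBh0, hBh⟩ := bound_tele hPst hv
  -- lower bound on the limsup
  have hlim : C.g n + ε * β ≤ C.Mdp.avgCost ds z := by
    rw [C.avgCost_eq]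
    apply le_limsup_avg hPst _ _ (C := 2 * Bh)
    filter_upwards [hev, eventually_ge_atTop 1] with N hNf hN1
    have hN0 : (0:ℝ) < N := by
      have : (1:ℝ) ≤ N := by exact_mod_cast hN1
      linarith
    have h1 := telescope hPst hcl _ hv s (C.g n) heq (Set.mem_univ z) N
    have h2 : ∀ t : ℕ, ε * (P' ^ t) z z ≤ (P' ^ t).mulVec s z := by
      intro t
      have h3 : (P' ^ t) z z * s z ≤ (P' ^ t).mulVec s z := by
        exact Finset.single_le_sum (f := fun i => (P' ^ t) z i * s i)
          (fun i _ => mul_nonneg ((hPst.pow t).1 z i) (hs0 i)) (Finset.mem_univ z)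
      have h4 : ε * (P' ^ t) z z ≤ (P' ^ t) z z * s z := by
        rw [mul_comm]
        exact mul_le_mul_of_nonneg_left hsz ((hPst.pow t).1 z z)
      linarith
    have h5 : ε * ∑ t ∈ Finset.range N, (P' ^ t) z z
        ≤ ∑ t ∈ Finset.range N, (P' ^ t).mulVec s z := by
      rw [Finset.mul_sum]
      exact Finset.sum_le_sum fun t _ => h2 t
    have e1 : |hv z| ≤ Bh := by
      have h6 := hBh 0 z
      rwa [pow_zero, Matrix.one_mulVec] at h6
    have e2 := abs_le.mp (hBh N z)
    have e1' := abs_le.mp e1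
    have hsum : (N:ℝ) * C.g n - 2 * Bh + ε * ∑ t ∈ Finset.range N, (P' ^ t) z z
        ≤ ∑ t ∈ Finset.range N, (P' ^ t).mulVec (C.Mdp.cvec ds) z := by
      rw [h1]
      linarith [e1'.1, e2.2]
    -- divide by N
    unfold avgSeq
    have h7 : (N:ℝ)⁻¹ * ((N:ℝ) * C.g n - 2 * Bh + ε * ∑ t ∈ Finset.range N, (P' ^ t) z z)
        ≤ (N:ℝ)⁻¹ * ∑ t ∈ Finset.range N, (P' ^ t).mulVec (C.Mdp.cvec ds) z :=
      mul_le_mul_of_nonneg_left hsum (le_of_lt (inv_pos.mpr hN0))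
    have h8 : (N:ℝ)⁻¹ * ((N:ℝ) * C.g n - 2 * Bh + ε * ∑ t ∈ Finset.range N, (P' ^ t) z z)
        = C.g n - 2 * Bh * (N:ℝ)⁻¹
          + ε * ((N:ℝ)⁻¹ * ∑ t ∈ Finset.range N, (P' ^ t) z z) := by
      field_simp
    have h9 : ε * β ≤ ε * ((N:ℝ)⁻¹ * ∑ t ∈ Finset.range N, (P' ^ t) z z) :=
      mul_le_mul_of_nonneg_left hNf (le_of_lt hεpos)
    rw [h8] at h7
    linarith
  rw [havg] at hlim
  nlinarith

/-- Construction of an everywhere-optimal policy in the equality case. -/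
lemma dpp (n : ℕ) (hgeq : C.g (n + 1) = C.g n) {K : Fin (M + 1)}
    (hKne : (C.Bbar K).Nonempty)
    (hgK : C.g (n + 1) = C.g n + C.u n K)
    (hdr : C.d (n + 1) K = C.ar n K)
    (hdi : ∀ i : Fin (M + 1), K < i → C.d (n + 1) i = C.aa n i)
    (hU : ∀ r, (C.Bbar r).Nonempty → 0 ≤ C.u n r) :
    ∃ d'' : Fin (M + 1) → A,
      (∀ i : Fin (M + 1), K ≤ i → d'' i = C.d (n + 1) i)
      ∧ (∀ j, C.Mdp.avgCost d'' j = C.g (n + 1))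
      ∧ ∀ (d' : Fin (M + 1) → A) (j : Fin (M + 1)),
          C.Mdp.avgCost d'' j ≤ C.Mdp.avgCost d' j := by
  classical
  have huK : C.u n K = 0 := by linarith
  set C0 : Set (Fin (M + 1)) := {i | K ≤ i} with hC0
  -- reachability layers
  set reach : ℕ → Set (Fin (M + 1)) := fun m =>
    Nat.rec C0 (fun _ R => R ∪ {i | ∃ a j, j ∈ R ∧ C.Mdp.p i a j ≠ 0}) m with hreachdef
  have reach_succ : ∀ m, reach (m + 1)
      = reach m ∪ {i | ∃ a j, j ∈ reach m ∧ C.Mdp.p i a j ≠ 0} := fun m => rfl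
  have reach_mono : ∀ {m m' : ℕ}, m ≤ m' → reach m ⊆ reach m' := by
    intro m m' h
    induction h with
    | refl => exact subset_rfl
    | step h' ih => exact ih.trans (by rw [reach_succ _]; exact Set.subset_union_left)
  have hreachall : ∀ i, ∃ m, i ∈ reach m := by
    intro i
    obtain ⟨d0, n0, hpos⟩ := C.hcomm i (Fin.last M)
    obtain ⟨x, hx0, hxn, hxs⟩ :=
      path_of_pow_pos (C.Pmat_rowstoch d0).1 n0 i (Fin.last M) hpos
    have key : ∀ s, s ≤ n0 → x (n0 - s) ∈ reach s := by
      intro s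
      induction s with
      | zero =>
        intro _
        simp only [Nat.sub_zero, hxn]
        show K ≤ Fin.last M
        exact Fin.le_last K
      | succ s ih =>
        intro hs
        have h1 : x (n0 - s) ∈ reach s := ih (by omega)
        have h2 : C.Mdp.Pmat d0 (x (n0 - (s + 1))) (x (n0 - (s + 1) + 1)) ≠ 0 :=
          hxs _ (by omega)
        have h3 : n0 - (s + 1) + 1 = n0 - s := by omega
        rw [reach_succ]
        right
        refine ⟨d0 (x (n0 - (s + 1))), x (n0 - s), h1, ?_⟩
        rw [← h3]
        exact h2
    have hk := key n0 (le_refl n0)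
    rw [Nat.sub_self, hx0] at hk
    exact ⟨n0, hk⟩
  -- choose actions on the transient part
  have hchoice : ∀ i : Fin (M + 1), ¬ K ≤ i →
      ∃ a, ∃ j, j ∈ reach (Nat.find (hreachall i) - 1) ∧ C.Mdp.p i a j ≠ 0 := by
    intro i hi
    have hfind := Nat.find_spec (hreachall i)
    have hm0 : Nat.find (hreachall i) ≠ 0 := by
      intro h
      rw [h] at hfind
      exact hi hfind
    have hmlt : i ∉ reach (Nat.find (hreachall i) - 1) :=
      Nat.find_min (hreachall i) (by omega)
    have h4 : i ∈ reach ((Nat.find (hreachall i) - 1) + 1) := by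
      rw [(by omega : Nat.find (hreachall i) - 1 + 1 = Nat.find (hreachall i))]
      exact hfind
    rw [reach_succ] at h4
    rcases h4 with h | h
    · exact absurd h hmlt
    · exact h
  set d2 : Fin (M + 1) → A := fun i =>
    if h : K ≤ i then C.d (n + 1) i else (hchoice i h).choose with hd2
  have hd2C : ∀ i, K ≤ i → d2 i = C.d (n + 1) i := fun i hi => dif_pos hi
  set P2 := C.Mdp.Pmat d2 with hP2
  have hP2st : RowStoch P2 := C.Pmat_rowstoch d2
  have hcl2 : MClosed P2 C0 := by
    intro i hi j hpij
    have h1 : C.Mdp.Pmat (C.d (n + 1)) i j ≠ 0 := by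
      rw [C.Pmat_apply, ← hd2C i hi]
      exact hpij
    exact C.closed_above n hKne hdr i hi j h1
  -- hitting probabilities
  set indC : Fin (M + 1) → ℝ := fun i => if K ≤ i then 1 else 0 with hindC
  set q : ℕ → Fin (M + 1) → ℝ := fun l => (P2 ^ l).mulVec indC with hqdef
  have hq0 : ∀ i, q 0 i = indC i := by
    intro i; simp only [hqdef, pow_zero, Matrix.one_mulVec]
  have hqnn : ∀ l i, 0 ≤ q l i := by
    intro l i
    exact mulVec_nonneg (entry_nonneg_pow hP2st.1 l) (fun i => by
      by_cases h : K ≤ i <;> simp [hindC, h]) i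
  have hqle1 : ∀ l i, q l i ≤ 1 := by
    intro l i
    have h1 : ∀ j, indC j ≤ (fun _ => (1:ℝ)) j := by
      intro j; by_cases h : K ≤ j <;> simp [hindC, h]
    have h2 := mulVec_mono (entry_nonneg_pow hP2st.1 l) h1 i
    rwa [mulVec_const (hP2st.pow l) 1 i] at h2
  have hqC : ∀ l, ∀ i, K ≤ i → q l i = 1 := by
    intro l i hi
    have h1 : ∀ j, (P2 ^ l) i j * indC j = (P2 ^ l) i j := by
      intro j
      by_cases hj : K ≤ j
      · simp [hindC, hj]
      · rw [hcl2.pow_zero hi hj l]; simp [hindC, hj]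
    show ∑ j, (P2 ^ l) i j * indC j = 1
    rw [Finset.sum_congr rfl fun j _ => h1 j]
    exact (hP2st.pow l).2 i
  have hqsucc : ∀ l i, q (l + 1) i = P2.mulVec (q l) i := by
    intro l i
    simp only [hqdef]
    rw [pow_succ', ← Matrix.mulVec_mulVec]
  have hqmono : ∀ l i, q l i ≤ q (l + 1) i := by
    intro l
    induction l with
    | zero =>
      intro i
      rw [hq0]
      by_cases h : K ≤ i
      · rw [hqC 1 i h]; simp [hindC, h]
      · simp only [hindC, if_neg h]; exact hqnn 1 i
    | succ l ih =>
      intro i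
      rw [hqsucc l i, hqsucc (l + 1) i]
      exact mulVec_mono hP2st.1 ih i
  have hqmono' : ∀ {l l' : ℕ}, l ≤ l' → ∀ i, q l i ≤ q l' i := by
    intro l l' h
    induction h with
    | refl => intro i; exact le_refl _
    | step h' ih => intro i; exact (ih i).trans (hqmono _ i)
  have hqpos : ∀ m, ∀ i ∈ reach m, 0 < q m i := by
    intro m
    induction m using Nat.strong_induction_on with
    | _ m ih =>
      intro i hi
      cases m with
      | zero =>
        rw [hq0]
        have : K ≤ i := hi
        simp [hindC, this]
      | succ m' =>
        rw [reach_succ] at hi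
        rcases hi with h | h
        · exact lt_of_lt_of_le (ih m' (by omega) i h) (hqmono m' i)
        · by_cases hKi : K ≤ i
          · rw [hqC (m' + 1) i hKi]; exact one_pos
          · obtain ⟨j0, hj0r, hj0p⟩ := (hchoice i hKi).choose_spec
            have hmf : Nat.find (hreachall i) ≤ m' + 1 :=
              Nat.find_le (by rw [reach_succ]; exact Or.inr h)
            have hmf0 : Nat.find (hreachall i) ≠ 0 := by
              intro h0
              have := Nat.find_spec (hreachall i)
              rw [h0] at this
              exact hKi this
            have hj0q : 0 < q (Nat.find (hreachall i) - 1) j0 :=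
              ih (Nat.find (hreachall i) - 1) (by omega) j0 hj0r
            have hj0q' : 0 < q m' j0 :=
              lt_of_lt_of_le hj0q (hqmono' (by omega) j0)
            have hP2ij : 0 < P2 i j0 := by
              have h5 : P2 i j0 = C.Mdp.p i ((hchoice i hKi).choose) j0 := by
                rw [hP2, C.Pmat_apply, hd2]
                simp only [dif_neg hKi]
              rw [h5]
              exact lt_of_le_of_ne (C.Mdp.p_nonneg _ _ _) (Ne.symm hj0p)
            rw [hqsucc m' i]
            have h6 : P2 i j0 * q m' j0 ≤ P2.mulVec (q m') i :=
              Finset.single_le_sum (f := fun j => P2 i j * q m' j)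
                (fun j _ => mul_nonneg (hP2st.1 i j) (hqnn m' j)) (Finset.mem_univ j0)
            exact lt_of_lt_of_le (mul_pos hP2ij hj0q') h6
  -- uniform positive hitting probability
  set L := Finset.univ.sup (fun i => Nat.find (hreachall i)) with hL
  have hqLpos : ∀ i, 0 < q L i := by
    intro i
    refine lt_of_lt_of_le (hqpos (Nat.find (hreachall i)) i (Nat.find_spec (hreachall i))) ?_
    exact hqmono' (Finset.le_sup (f := fun i => Nat.find (hreachall i)) (Finset.mem_univ i)) i
  obtain ⟨i0, -, hi0min⟩ :=
    Finset.exists_min_image Finset.univ (q L) ⟨0, Finset.mem_univ 0⟩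
  set δ := q L i0 with hδ
  have hδpos : 0 < δ := hqLpos i0
  have hδle : ∀ i, δ ≤ q L i := fun i => hi0min i (Finset.mem_univ i)
  -- the taboo matrix
  set Q : Matrix (Fin (M + 1)) (Fin (M + 1)) ℝ :=
    Matrix.of (fun i j => if K ≤ i then 0 else P2 i j) with hQ
  have hQnn : ∀ i j, 0 ≤ Q i j := by
    intro i j
    show (0:ℝ) ≤ if K ≤ i then 0 else P2 i j
    by_cases h : K ≤ i
    · simp [h]
    · simp only [if_neg h]; exact hP2st.1 i j
  have hQrow : ∀ i, ¬ K ≤ i → ∀ v, Q.mulVec v i = P2.mulVec v i := by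
    intro i hi v
    unfold Matrix.mulVec dotProduct
    apply Finset.sum_congr rfl
    intro j _
    show (if K ≤ i then 0 else P2 i j) * v j = P2 i j * v j
    rw [if_neg hi]
  have hQrow0 : ∀ i, K ≤ i → ∀ v, Q.mulVec v i = 0 := by
    intro i hi v
    unfold Matrix.mulVec dotProduct
    apply Finset.sum_eq_zero
    intro j _
    show (if K ≤ i then 0 else P2 i j) * v j = 0
    rw [if_pos hi, zero_mul]
  have hQbound : ∀ l i, (Q ^ (l + 1)).mulVec (fun _ => 1) i ≤ 1 - q l i := by
    intro l
    induction l with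
    | zero =>
      intro i
      rw [pow_one, hq0]
      by_cases h : K ≤ i
      · rw [hQrow0 i h]; simp [hindC, h]
      · rw [hQrow i h, mulVec_const hP2st 1 i]
        simp [hindC, h]
    | succ l ih =>
      intro i
      have h1 : (Q ^ (l + 2)).mulVec (fun _ => (1:ℝ)) i
          = Q.mulVec ((Q ^ (l + 1)).mulVec (fun _ => 1)) i := by
        rw [pow_succ', ← Matrix.mulVec_mulVec]
      rw [h1]
      by_cases h : K ≤ i
      · rw [hQrow0 i h]
        have := hqle1 (l + 1) i
        linarith
      · rw [hQrow i h]
        have h2 : P2.mulVec ((Q ^ (l + 1)).mulVec (fun _ => 1)) i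
            ≤ P2.mulVec (fun j => 1 - q l j) i :=
          mulVec_mono hP2st.1 ih i
        have h3 : P2.mulVec (fun j => 1 - q l j) i = 1 - q (l + 1) i := by
          have e : (fun j => 1 - q l j) = (fun _ : Fin (M+1) => (1:ℝ)) - q l := by
            funext j; simp
          rw [e, Matrix.mulVec_sub]
          simp only [Pi.sub_apply]
          rw [mulVec_const hP2st 1 i, hqsucc l i]
        linarith
  -- injectivity hence surjectivity of 1 - Q
  have hker : ∀ v : Fin (M + 1) → ℝ, (1 - Q).mulVec v = 0 → v = 0 := by
    intro v hv
    have hfix : v = Q.mulVec v := by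
      have h1 : (1 - Q).mulVec v = v - Q.mulVec v := by
        rw [Matrix.sub_mulVec, Matrix.one_mulVec]
      rw [h1] at hv
      have := sub_eq_zero.mp hv
      exact this
    have hiter : ∀ l, v = (Q ^ l).mulVec v := by
      intro l
      induction l with
      | zero => rw [pow_zero, Matrix.one_mulVec]
      | succ l ih =>
        rw [pow_succ, ← Matrix.mulVec_mulVec, ← hfix]
        exact ih
    obtain ⟨i1, -, hmax⟩ :=
      Finset.exists_max_image Finset.univ (fun i => |v i|) ⟨0, Finset.mem_univ 0⟩
    have h2 : |v i1| ≤ |v i1| * (1 - q L i1) := by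
      calc |v i1| = |(Q ^ (L + 1)).mulVec v i1| := by rw [← hiter (L + 1)]
        _ ≤ |v i1| * (Q ^ (L + 1)).mulVec (fun _ => 1) i1 :=
            abs_mulVec_le_of_nonneg (entry_nonneg_pow hQnn (L + 1))
              (fun i => hmax i (Finset.mem_univ i)) i1
        _ ≤ |v i1| * (1 - q L i1) :=
            mul_le_mul_of_nonneg_left (hQbound L i1) (abs_nonneg _)
    have h3 : |v i1| = 0 := by
      have h4 := hδle i1
      nlinarith [abs_nonneg (v i1)]
    funext i
    have h5 := hmax i (Finset.mem_univ i)
    rw [h3] at h5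
    have := abs_nonneg (v i)
    show v i = 0
    have h6 : |v i| = 0 := le_antisymm h5 this
    exact abs_eq_zero.mp h6
  have hinj : Function.Injective (Matrix.mulVecLin (1 - Q)) := by
    rw [← LinearMap.ker_eq_bot, LinearMap.ker_eq_bot']
    intro v hv
    exact hker v hv
  have hsurj : Function.Surjective (Matrix.mulVecLin (1 - Q)) :=
    LinearMap.injective_iff_surjective.mp hinj
  set bvec : Fin (M + 1) → ℝ := fun i =>
    if K ≤ i then C.hvec n i else C.Mdp.c i (d2 i) - C.g n with hbvec
  obtain ⟨h2, hh2⟩ := hsurj bvec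
  have hfix2 : ∀ i, h2 i = Q.mulVec h2 i + bvec i := by
    intro i
    have h1 : (1 - Q).mulVec h2 = bvec := hh2
    have h3 : (1 - Q).mulVec h2 i = h2 i - Q.mulVec h2 i := by
      rw [Matrix.sub_mulVec, Matrix.one_mulVec]; rfl
    have h4 := congrFun h1 i
    rw [h3] at h4
    linarith
  have honC : ∀ i, K ≤ i → h2 i = C.hvec n i := by
    intro i hi
    rw [hfix2 i, hQrow0 i hi, hbvec]
    simp [hi]
  -- global Bellman equalities for d2
  have heqAll : ∀ i ∈ (Set.univ : Set (Fin (M + 1))),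
      C.Mdp.cvec d2 i + P2.mulVec h2 i = C.g n + h2 i + (fun _ => (0:ℝ)) i := by
    intro i _
    by_cases hKi : K ≤ i
    · have e1 : P2.mulVec h2 i = (C.Mdp.Pmat (C.d (n + 1))).mulVec (C.hvec n) i := by
        unfold Matrix.mulVec dotProduct
        apply Finset.sum_congr rfl
        intro j _
        show P2 i j * h2 j = C.Mdp.Pmat (C.d (n + 1)) i j * C.hvec n j
        have e2 : P2 i j = C.Mdp.Pmat (C.d (n + 1)) i j := by
          rw [hP2, C.Pmat_apply, C.Pmat_apply, hd2C i hKi]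
        by_cases hKj : K ≤ j
        · rw [e2, honC j hKj]
        · have e3 : P2 i j = 0 := by
            by_contra hne
            exact hKj (hcl2 i hKi j hne)
          show P2 i j * h2 j = C.Mdp.Pmat (C.d (n + 1)) i j * C.hvec n j
          rw [← e2, e3, zero_mul, zero_mul]
      have e4 : C.Mdp.cvec d2 i = C.Mdp.cvec (C.d (n + 1)) i := by
        show C.Mdp.c i (d2 i) = C.Mdp.c i (C.d (n + 1) i)
        rw [hd2C i hKi]
      rw [e1, e4, C.step_eqs n hKne hdr hdi hKi, honC i hKi]
      by_cases hiK : i = K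
      · rw [if_pos hiK, huK] <;> try ring
      · rw [if_neg hiK] <;> try ring
    · have e5 : Q.mulVec h2 i = P2.mulVec h2 i := hQrow i hKi h2
      have e6 := hfix2 i
      rw [e5, hbvec] at e6
      simp only [if_neg hKi] at e6
      show C.Mdp.c i (d2 i) + P2.mulVec h2 i = C.g n + h2 i + 0
      linarith
  -- average cost of d2
  obtain ⟨Bh2, hBh20, hBh2⟩ := bound_tele hP2st h2
  have hclu : MClosed P2 (Set.univ : Set (Fin (M + 1))) := fun i _ j _ => trivial
  have havg2 : ∀ j, C.Mdp.avgCost d2 j = C.g (n + 1) := by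
    intro j
    rw [C.avgCost_eq, hgeq]
    apply limsup_avg_eq (C := 2 * Bh2)
    intro N
    have h1 := telescope hP2st hclu _ h2 (fun _ => (0:ℝ)) (C.g n) heqAll
      (Set.mem_univ j) N
    have h7 : ∑ t ∈ Finset.range N, (P2 ^ t).mulVec (fun _ => (0:ℝ)) j = 0 := by
      apply Finset.sum_eq_zero
      intro t _
      show (P2 ^ t).mulVec (fun _ => (0:ℝ)) j = 0
      have : (fun _ : Fin (M + 1) => (0:ℝ)) = fun _ => (0:ℝ) := rfl
      rw [show (fun _ : Fin (M + 1) => (0:ℝ)) = (0 : Fin (M+1) → ℝ) from rfl,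
        Matrix.mulVec_zero]
      rfl
    rw [h1, h7]
    have e1 : |h2 j| ≤ Bh2 := by
      have h5 := hBh2 0 j
      rwa [pow_zero, Matrix.one_mulVec] at h5
    have e2 := abs_le.mp (hBh2 N j)
    have e1' := abs_le.mp e1
    rw [abs_le]
    constructor <;> [linarith [e1'.1, e2.2]; linarith [e1'.2, e2.1]]
  exact ⟨d2, hd2C, havg2, fun d' j => by
    rw [havg2 j, hgeq]
    exact C.min_avg n hU d' j⟩

lemma exists_fix : ∃ n : ℕ, C.g (n + 1) = C.g n := by
  by_contra hno
  push_neg at hno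
  have hlt : ∀ n, C.g (n + 1) < C.g n := fun n => lt_of_le_of_ne (C.g_mono n) (hno n)
  have hanti : StrictAnti (fun n => C.g n) := strictAnti_nat_of_succ_lt hlt
  have hinj : Function.Injective (fun n : ℕ => C.g (n + 1)) := by
    intro a b hab
    have h1 : a + 1 = b + 1 := hanti.injective hab
    omega
  have hmem : ∀ n : ℕ, C.g (n + 1) ∈ Set.range
      (fun p : ((Fin (M + 1) → A) × Fin (M + 1)) => C.Mdp.avgCost p.1 p.2) := by
    intro n
    obtain ⟨z, -, -, -, -, havg, -⟩ := C.eval n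
    exact ⟨(C.d (n + 1), z), havg z (le_refl z)⟩
  exact (Set.infinite_of_injective_forall_mem hinj hmem) (Set.finite_range _)

end Ctx
end SFAux
end

/-- Theorem 2. For the modified skip-free algorithm applied to a finite
communicating skip-free MDP on `{0,…,M}`: (i) at each iteration either `g (n+1) < g n`, or
`g (n+1) = g n`, in which case `g (n+1)` is the minimal average cost, there is `K` such
that `d (n+1)` together with `x = g (n+1)` and the computed values `y n` satisfies the
skip-free optimality equations of the restricted model `Π_K` on states `K,…,M`, and
`d (n+1)` can be modified on the states `0,…,K-1` to give a policy that is average cost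
optimal for every starting state; (ii) the algorithm converges after finitely many
iterations. -/
theorem stmt15 {M : ℕ} {A : Type*} [Fintype A] [Nonempty A]
    (Mdp : MDP (Fin (M + 1)) A)
    (hsf : ∀ (i j : Fin (M + 1)) (a : A), (j : ℕ) + 1 < (i : ℕ) → Mdp.p i a j = 0)
    (hBne : ∀ i : Fin (M + 1), i ≠ 0 → ∃ a : A, 0 < Mdp.p i a (i - 1))
    (hcomm : ∀ i j : Fin (M + 1), ∃ d : Fin (M + 1) → A, ∃ n : ℕ, 0 < ((Mdp.Pmat d) ^ n) i j)
    (B Bbar : Fin (M + 1) → Set A)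
    (hBdef : ∀ i, B i = {a : A | 0 < Mdp.p i a (i - 1)})
    (hBbardef : ∀ i, Bbar i = if i = 0 then (Set.univ : Set A)
        else {a : A | Mdp.p i a (i - 1) = 0})
    (d : ℕ → Fin (M + 1) → A) (g : ℕ → ℝ)
    (y t : ℕ → Fin (M + 1) → ℝ) (aa ar : ℕ → Fin (M + 1) → A)
    (u : ℕ → Fin (M + 1) → ℝ)
    (hg0 : (∃! E : Set (Fin (M + 1)), IsClosedClass (Mdp.Pmat (d 0)) E)
      ∧ ∀ j, g 0 = Mdp.avgCost (d 0) j)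
    (hy : ∀ n, ∀ i : Fin (M + 1), i ≠ 0 →
      y n i = ⨅ a : (B i),
        (Mdp.c i ↑a - g n + ∑ k ∈ Finset.Ioi i, ptailF Mdp i ↑a k * y n k)
          / Mdp.p i ↑a (i - 1))
    (haa : ∀ n, ∀ i : Fin (M + 1), i ≠ 0 → aa n i ∈ B i ∧
      (Mdp.c i (aa n i) - g n + ∑ k ∈ Finset.Ioi i, ptailF Mdp i (aa n i) k * y n k)
          / Mdp.p i (aa n i) (i - 1) = y n i)
    (ht : ∀ n, ∀ i : Fin (M + 1), i ≠ 0 →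
      t n i = (1 + ∑ k ∈ Finset.Ioi i, ptailF Mdp i (aa n i) k * t n k)
          / Mdp.p i (aa n i) (i - 1))
    (hu : ∀ n, ∀ r : Fin (M + 1), (Bbar r).Nonempty →
      ar n r ∈ Bbar r
      ∧ u n r = ⨅ a : (Bbar r),
          (Mdp.c r ↑a - g n + ∑ k ∈ Finset.Ioi r, ptailF Mdp r ↑a k * y n k)
            / (1 + ∑ k ∈ Finset.Ioi r, ptailF Mdp r ↑a k * t n k)
      ∧ (Mdp.c r (ar n r) - g n + ∑ k ∈ Finset.Ioi r, ptailF Mdp r (ar n r) k * y n k)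
            / (1 + ∑ k ∈ Finset.Ioi r, ptailF Mdp r (ar n r) k * t n k) = u n r)
    (hstep : ∀ n, ∃ r : Fin (M + 1), (Bbar r).Nonempty
      ∧ g (n + 1) = g n + u n r
      ∧ (∀ r' : Fin (M + 1), (Bbar r').Nonempty → g (n + 1) ≤ g n + u n r')
      ∧ (∀ r' : Fin (M + 1), (Bbar r').Nonempty → g n + u n r' = g (n + 1) → r ≤ r')
      ∧ d (n + 1) r = ar n r
      ∧ (∀ i : Fin (M + 1), r < i → d (n + 1) i = aa n i)) :
    (∀ n : ℕ,
      g (n + 1) < g n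
      ∨ (g (n + 1) = g n
        ∧ (∀ (d' : Fin (M + 1) → A) (j : Fin (M + 1)), g (n + 1) ≤ Mdp.avgCost d' j)
        ∧ ∃ K : Fin (M + 1), (Bbar K).Nonempty
          ∧ (∀ i : Fin (M + 1), K < i →
              (Mdp.c i (d (n + 1) i) - g (n + 1)
                  + ∑ k ∈ Finset.Ioi i, ptailF Mdp i (d (n + 1) i) k * y n k)
                / Mdp.p i (d (n + 1) i) (i - 1) = y n i)
          ∧ (0 = ⨅ a : (Bbar K),
              (Mdp.c K ↑a - g (n + 1) + ∑ k ∈ Finset.Ioi K, ptailF Mdp K ↑a k * y n k))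
          ∧ (Mdp.c K (d (n + 1) K) - g (n + 1)
              + ∑ k ∈ Finset.Ioi K, ptailF Mdp K (d (n + 1) K) k * y n k = 0)
          ∧ ∃ d'' : Fin (M + 1) → A,
              (∀ i : Fin (M + 1), K ≤ i → d'' i = d (n + 1) i)
              ∧ (∀ j, Mdp.avgCost d'' j = g (n + 1))
              ∧ ∀ (d' : Fin (M + 1) → A) (j : Fin (M + 1)),
                  Mdp.avgCost d'' j ≤ Mdp.avgCost d' j))
    ∧ ∃ n : ℕ, g (n + 1) = g n := by
  let C : SFAux.Ctx M A :=
    ⟨Mdp, hsf, hBne, hcomm, B, Bbar, hBdef, hBbardef, d, g, y, t, aa, ar, u,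
      hg0, hy, haa, ht, hu, hstep⟩
  constructor
  · intro n
    rcases lt_or_eq_of_le (C.g_mono n) with hlt | heq
    · exact Or.inl hlt
    · right
      have heq2 : g (n + 1) = g n := heq
      obtain ⟨K, hKne, hgK, hminK, -, hdr, hdi⟩ := hstep n
      have hU : ∀ r, (Bbar r).Nonempty → 0 ≤ u n r := by
        intro r hr
        have := hminK r hr
        linarith
      have huK : u n K = 0 := by linarith
      have huK2 : C.u n K = 0 := huK
      have hKne2 : (C.Bbar K).Nonempty := hKne
      refine ⟨heq2, ?_, K, hKne, ?_, ?_, ?_, ?_⟩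
      · intro d' j
        rw [heq2]
        exact C.min_avg n hU d' j
      · intro i hi
        have hi0 : i ≠ 0 := by
          intro h; subst h
          exact absurd hi (by simp [Fin.lt_def])
        rw [heq2, hdi i hi]
        exact (haa n i hi0).2
      · haveI : Nonempty (Bbar K) := hKne.to_subtype
        have h3 : Mdp.c K (ar n K) - g (n + 1)
            + ∑ k ∈ Finset.Ioi K, ptailF Mdp K (ar n K) k * y n k = 0 := by
          have h4 := C.num_ar n hKne2
          rw [huK2, zero_mul] at h4
          rw [heq2]
          exact h4
        have h1 : (⨅ a : (Bbar K),
            (Mdp.c K ↑a - g (n + 1) + ∑ k ∈ Finset.Ioi K, ptailF Mdp K ↑a k * y n k)) ≤ 0 := by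
          have h2 := ciInf_le (f := fun a : (Bbar K) =>
              Mdp.c K ↑a - g (n + 1) + ∑ k ∈ Finset.Ioi K, ptailF Mdp K ↑a k * y n k)
            (Finite.bddBelow_range _) (⟨ar n K, (hu n K hKne).1⟩ : Bbar K)
          rw [h3] at h2
          exact h2
        have h5 : (0:ℝ) ≤ ⨅ a : (Bbar K),
            (Mdp.c K ↑a - g (n + 1) + ∑ k ∈ Finset.Ioi K, ptailF Mdp K ↑a k * y n k) := by
          apply le_ciInf
          intro a
          have h6 := C.u_le n hKne2 a.2
          rw [huK2, zero_mul] at h6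
          rw [heq2]
          exact h6
        exact (le_antisymm h1 h5).symm
      · rw [heq2, hdr]
        have h4 := C.num_ar n hKne2
        rw [huK2, zero_mul] at h4
        exact h4
      · exact C.dpp n heq hKne2 hgK hdr hdi hU
  · exact C.exists_fix
end

section
/- Let a finite MDP on S = {0, 1, …, M} with finite action set A, costs c_i(a) and transition probabilities p_{ij}(a) be given, and let β ∈ (0,1). Define the modified average-cost MDP on {0, 1, …, M+1} by p'_{ij}(a) = β p_{ij}(a) and c'_i(a) = c_i(a) for i, j ≤ M; p'_{M+1,M}(a) = β and c'_{M+1}(a) = 0; and p'_{i,M+1}(a) = 1 − β for all i ∈ {0,…,M+1}. Suppose g' ∈ ℝ and h' : {0,…,M+1} → ℝ satisfy the average cost optimality equations of the modified model: h'_i = min_{a∈A} { c'_i(a) − g' + ∑_{j=0}^{M+1} p'_{ij}(a) h'_j } for all i, where the equation for state M+1 holds with no minimisation (the right-hand side is independent of a). Then v_j := h'_j − h'_{M+1} + g'/(1−β), j = 0,…,M, satisfies the discounted cost optimality equations v_i = min_{a∈A} { c_i(a) + β ∑_{j=0}^M p_{ij}(a) v_j } for all i ∈ {0,…,M}; for every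 i ≤ M, an action attains the minimum in the modified average-cost equation at i if and only if it attains the minimum in the discounted equation at i; and, writing y'_j = h'_j − h'_{j−1} for j = 1,…,M+1, one has v_j = g'/(1−β) − (y'_{j+1} + ⋯ + y'_{M+1}) for each j ≤ M. -/
open Finset

lemma tele {n : ℕ} (f : Fin (n + 1) → ℝ) (j : Fin (n + 1)) :
    ∑ k ∈ Finset.Ioi j, (f k - f (k - 1)) = f (Fin.last n) - f j := by
  induction j using Fin.reverseInduction with
  | last =>
    have he : Finset.Ioi (Fin.last n) = ∅ := by
      ext k
      simp [Finset.mem_Ioi, Fin.lt_def]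
      omega
    simp [he]
  | cast i ih =>
    have hins : Finset.Ioi i.castSucc = insert i.succ (Finset.Ioi i.succ) := by
      ext k
      simp only [Finset.mem_Ioi, Finset.mem_insert, Fin.lt_def, Fin.ext_iff,
        Fin.coe_castSucc, Fin.val_succ]
      omega
    have hi : (i : ℕ) < n := i.isLt
    have hsub : i.succ - 1 = i.castSucc := by
      apply Fin.ext
      rw [Fin.sub_def]
      have h1 : ((1 : Fin (n + 1)) : ℕ) = 1 := by
        rw [Fin.val_one']
        exact Nat.mod_eq_of_lt (by omega)
      simp only [h1, Fin.val_succ, Fin.coe_castSucc]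
      rw [show n + 1 - 1 + ((i : ℕ) + 1) = (i : ℕ) + (n + 1) by omega]
      rw [Nat.add_mod_right]
      exact Nat.mod_eq_of_lt (by omega)
    rw [hins, Finset.sum_insert (by simp), ih, hsub]
    ring

/-- the discounted-cost problem as a modified average-cost problem. If
`(g', h')` solve the average cost optimality equations of the modified model on
`{0,…,M+1}` (with `p'_{ij}(a) = β p_{ij}(a)`, `p'_{M+1,M}(a) = β`, `p'_{i,M+1}(a) = 1-β`,
`c'_i(a) = c_i(a)` for `i ≤ M`, `c'_{M+1}(a) = 0`), then
`v_j = h'_j - h'_{M+1} + g'/(1-β)` solves the `β`-discounted optimality equations of the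
original model; an action attains the minimum in the modified average-cost equation at
`i ≤ M` iff it attains the minimum in the discounted equation; and with
`y'_j = h'_j - h'_{j-1}`, `v_j = g'/(1-β) - (y'_{j+1} + ⋯ + y'_{M+1})`. -/
theorem stmt16 {M : ℕ} {A : Type*} [Fintype A] [Nonempty A]
    (c : Fin (M + 1) → A → ℝ) (p : Fin (M + 1) → A → Fin (M + 1) → ℝ)
    (hp : ∀ i a j, 0 ≤ p i a j) (hsum : ∀ i a, ∑ j, p i a j = 1)
    (β : ℝ) (hβ0 : 0 < β) (hβ1 : β < 1)
    (p' : Fin (M + 2) → A → Fin (M + 2) → ℝ)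
    (hp' : ∀ (i : Fin (M + 2)) (a : A) (j : Fin (M + 2)),
      p' i a j =
        if hj : (j : ℕ) < M + 1 then
          if hi : (i : ℕ) < M + 1 then β * p ⟨(i : ℕ), hi⟩ a ⟨(j : ℕ), hj⟩
          else if (j : ℕ) = M then β else 0
        else 1 - β)
    (c' : Fin (M + 2) → A → ℝ)
    (hc' : ∀ (i : Fin (M + 2)) (a : A),
      c' i a = if hi : (i : ℕ) < M + 1 then c ⟨(i : ℕ), hi⟩ a else 0)
    (g' : ℝ) (h' : Fin (M + 2) → ℝ)
    (hacoe : ∀ i : Fin (M + 2), h' i = ⨅ a : A, (c' i a - g' + ∑ j, p' i a j * h' j))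
    (v : Fin (M + 1) → ℝ)
    (hv : ∀ j : Fin (M + 1), v j = h' j.castSucc - h' (Fin.last (M + 1)) + g' / (1 - β)) :
    (∀ i : Fin (M + 1), v i = ⨅ a : A, (c i a + β * ∑ j, p i a j * v j))
    ∧ (∀ (i : Fin (M + 1)) (a : A),
        (c' i.castSucc a - g' + ∑ j, p' i.castSucc a j * h' j = h' i.castSucc)
          ↔ (c i a + β * ∑ j, p i a j * v j = v i))
    ∧ (∀ j : Fin (M + 1),
        v j = g' / (1 - β) - ∑ k ∈ Finset.Ioi j.castSucc, (h' k - h' (k - 1))) := by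
  have hβne : (1 : ℝ) - β ≠ 0 := by linarith
  set L := h' (Fin.last (M + 1)) with hL
  -- key identity: modified value of action a = discounted value of a + constant
  have key : ∀ (i : Fin (M + 1)) (a : A),
      c' i.castSucc a - g' + ∑ j, p' i.castSucc a j * h' j
        = (c i a + β * ∑ j, p i a j * v j) + (L - g' / (1 - β)) := by
    intro i a
    have hsum' : ∑ j : Fin (M + 2), p' i.castSucc a j * h' j
        = β * (∑ j : Fin (M + 1), p i a j * h' j.castSucc) + (1 - β) * L := by
      rw [Fin.sum_univ_castSucc]
      have hlast : p' i.castSucc a (Fin.last (M + 1)) = 1 - β := by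
        rw [hp']
        simp
      have hcast : ∀ j : Fin (M + 1),
          p' i.castSucc a j.castSucc = β * p i a j := by
        intro j
        rw [hp']
        simp [j.isLt, i.isLt]
      simp only [hcast, hlast]
      rw [Finset.mul_sum]
      ring_nf
      rw [hL]
    have hvsum : ∑ j : Fin (M + 1), p i a j * v j
        = (∑ j : Fin (M + 1), p i a j * h' j.castSucc) + (g' / (1 - β) - L) := by
      have : ∀ j : Fin (M + 1), p i a j * v j
          = p i a j * h' j.castSucc + p i a j * (g' / (1 - β) - L) := by
        intro j
        rw [hv]
        ring
      rw [Finset.sum_congr rfl fun j _ => this j, Finset.sum_add_distrib,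
        ← Finset.sum_mul, hsum]
      ring
    have hci : c' i.castSucc a = c i a := by
      rw [hc']
      simp [i.isLt]
    rw [hsum', hvsum, hci]
    field_simp
    ring
  have hvi : ∀ i : Fin (M + 1), v i = ⨅ a : A, (c i a + β * ∑ j, p i a j * v j) := by
    intro i
    have hbdd : BddBelow (Set.range fun a : A => c i a + β * ∑ j, p i a j * v j) :=
      (Set.finite_range _).bddBelow
    have := hacoe i.castSucc
    have heq : (⨅ a : A, (c' i.castSucc a - g' + ∑ j, p' i.castSucc a j * h' j))
        = (⨅ a : A, (c i a + β * ∑ j, p i a j * v j)) + (L - g' / (1 - β)) := by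
      rw [iInf_congr fun a => key i a]
      exact (ciInf_add hbdd _).symm
    rw [heq] at this
    rw [hv]
    linarith
  refine ⟨hvi, fun i a => ?_, fun j => ?_⟩
  · rw [key i a, hv]
    constructor <;> intro h <;> linarith
  · rw [tele h' j.castSucc, hv]
    ring
end
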